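/- arXiv:2002.12874 — 5 statements merged into one kernel-verified Lean document; each statement's English description precedes it below -/
import Mathlib

section
/- Let F ∈ ℤ[[x,y,s1,s2]] be the power series of Lemma 2.1 (coefficient of x^i y^j counts bicolored Motzkin paths with d+h1 = i and u+h2 = j), viewed in the four-variable ring, and let G ∈ ℤ[[x,y,s1,s2]] be the power series in which the coefficient of x^i y^j s1^k s2^m is the number of bicolored grand Motzkin paths M with d(M)+h1(M) = i, u(M)+h2(M) = j, h1⁰(M) = k, and h2⁰(M) = m. Then G·(1 − s1·x − s2·y − 2xy·F) = 1 in ℤ[[x,y,s1,s2]]. (Equivalently, G = 1/((1−s1)x + (1−s2)y + √((1−x−y)²−4xy)).) -/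
/-- Steps of a bicolored (grand) Motzkin path: up, down, and two colors of horizontal steps. -/
inductive BStep : Type
  | U | D | H1 | H2
  deriving DecidableEq

/-- A bicolored Motzkin path: a word over {U,D,H1,H2} such that every prefix has at
least as many U's as D's, and the whole word has equally many U's and D's. -/
def IsBicoloredMotzkin (w : List BStep) : Prop :=
  (∀ j, (w.take j).count BStep.D ≤ (w.take j).count BStep.U) ∧
    w.count BStep.U = w.count BStep.D

/-- A bicolored grand Motzkin path: a word over {U,D,H1,H2} with equally many U's and D's
(the path may go below the x-axis). -/
def IsBicoloredGrandMotzkin (w : List BStep) : Prop :=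
  w.count BStep.U = w.count BStep.D

/-- The number of `H1` steps of `w` lying on the x-axis, i.e. whose starting height
(number of earlier U's minus earlier D's) is `0`. -/
def h1zero (w : List BStep) : ℕ :=
  ((Finset.range w.length).filter fun i =>
    w.getD i BStep.U = BStep.H1 ∧ (w.take i).count BStep.U = (w.take i).count BStep.D).card

/-- The number of `H2` steps of `w` lying on the x-axis. -/
def h2zero (w : List BStep) : ℕ :=
  ((Finset.range w.length).filter fun i =>
    w.getD i BStep.U = BStep.H2 ∧ (w.take i).count BStep.U = (w.take i).count BStep.D).card

/-- The series `F` of Lemma 2.1 (coefficient of `x^i y^j` counts bicolored Motzkin paths with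
`d+h1 = i`, `u+h2 = j`), viewed in `ℤ[[x,y,s1,s2]]`.
Variables: `0 = x`, `1 = y`, `2 = s1`, `3 = s2`. -/
noncomputable def F : MvPowerSeries (Fin 4) ℤ := fun d =>
  if d 2 = 0 ∧ d 3 = 0 then
    ({w : List BStep | IsBicoloredMotzkin w ∧
        w.count BStep.D + w.count BStep.H1 = d 0 ∧
        w.count BStep.U + w.count BStep.H2 = d 1}.ncard : ℤ)
  else 0

/-- The series `G ∈ ℤ[[x,y,s1,s2]]` whose coefficient of `x^i y^j s1^k s2^m` is the number of
bicolored grand Motzkin paths `M` with `d(M)+h1(M) = i`, `u(M)+h2(M) = j`, `h1⁰(M) = k`,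
`h2⁰(M) = m`. -/
noncomputable def G : MvPowerSeries (Fin 4) ℤ := fun d =>
  ({w : List BStep | IsBicoloredGrandMotzkin w ∧
      w.count BStep.D + w.count BStep.H1 = d 0 ∧
      w.count BStep.U + w.count BStep.H2 = d 1 ∧
      h1zero w = d 2 ∧ h2zero w = d 3}.ncard : ℤ)

namespace BicolorAux
open BStep Finset

instance : Fintype BStep := ⟨{U, D, H1, H2}, fun x => by cases x <;> simp⟩

/-- signed height contribution of a step -/
def sh : BStep → ℤ | U => 1 | D => -1 | _ => 0

/-- height after a word -/
def hgt (w : List BStep) : ℤ := (w.count U : ℤ) - w.count D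

@[simp] lemma hgt_nil : hgt [] = 0 := by simp [hgt]

lemma hgt_cons (s : BStep) (w : List BStep) : hgt (s :: w) = sh s + hgt w := by
  cases s <;> simp [hgt, sh, List.count_cons] <;> push_cast <;> ring

lemma hgt_append (a b : List BStep) : hgt (a ++ b) = hgt a + hgt b := by
  simp [hgt, List.count_append]; push_cast; ring

/-- generalized count of steps equal to `s0` at height `c` -/
def gcount (s0 : BStep) (c : ℤ) (w : List BStep) : ℕ :=
  ((Finset.range w.length).filter fun i =>
    w.getD i U = s0 ∧ hgt (w.take i) = c).card

@[simp] lemma gcount_nil (s0 : BStep) (c : ℤ) : gcount s0 c [] = 0 := by simp [gcount]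

lemma gcount_cons (s0 s : BStep) (c : ℤ) (w : List BStep) :
    gcount s0 c (s :: w) = (if s = s0 ∧ c = 0 then 1 else 0) + gcount s0 (c - sh s) w := by
  rw [gcount, Finset.card_filter, List.length_cons, Finset.sum_range_succ']
  rw [gcount, Finset.card_filter, add_comm]
  congr 1
  · simp only [List.getD_cons_zero, List.take_zero, hgt_nil]
    congr 1
    exact propext ⟨fun h => ⟨h.1, by omega⟩, fun h => ⟨h.1, by omega⟩⟩
  · apply Finset.sum_congr rfl
    intro i _
    have h1 : (s :: w).getD (i + 1) U = w.getD i U := rfl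
    have h2 : (s :: w).take (i + 1) = s :: w.take i := rfl
    rw [h1, h2, hgt_cons]
    congr 1
    exact propext ⟨fun h => ⟨h.1, by omega⟩, fun h => ⟨h.1, by omega⟩⟩

lemma gcount_append (s0 : BStep) (c : ℤ) (a b : List BStep) :
    gcount s0 c (a ++ b) = gcount s0 c a + gcount s0 (c - hgt a) b := by
  induction a generalizing c with
  | nil => simp
  | cons s t ih =>
      rw [List.cons_append, gcount_cons, ih, gcount_cons, hgt_cons]
      have : c - sh s - hgt t = c - (sh s + hgt t) := by ring
      rw [this]
      ring

lemma gcount_eq_zero (s0 : BStep) (c : ℤ) (w : List BStep)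
    (h : ∀ i, hgt (w.take i) ≠ c) : gcount s0 c w = 0 := by
  rw [gcount, Finset.card_eq_zero, Finset.filter_eq_empty_iff]
  intro i _
  exact fun hc => h i hc.2

lemma h1zero_eq (w : List BStep) : h1zero w = gcount H1 0 w := by
  rw [h1zero, gcount]
  congr 1
  apply Finset.filter_congr
  intro i _
  simp only [hgt, sub_eq_zero]
  constructor <;> intro h <;> exact ⟨h.1, by exact_mod_cast h.2⟩

lemma h2zero_eq (w : List BStep) : h2zero w = gcount H2 0 w := by
  rw [h2zero, gcount]
  congr 1
  apply Finset.filter_congr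
  intro i _
  simp only [hgt, sub_eq_zero]
  constructor <;> intro h <;> exact ⟨h.1, by exact_mod_cast h.2⟩

lemma length_eq (w : List BStep) :
    w.length = w.count U + w.count D + w.count H1 + w.count H2 := by
  induction w with
  | nil => simp
  | cons s t ih => cases s <;> simp [List.count_cons, ih] <;> omega


noncomputable def statsF (w : List BStep) : Fin 4 →₀ ℕ :=
  Finsupp.equivFunOnFinite.symm ![w.count D + w.count H1, w.count U + w.count H2, h1zero w, h2zero w]

/-- stats of the arch `U m D` built from a Motzkin path `m` -/
noncomputable def astats (m : List BStep) : Fin 4 →₀ ℕ :=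
  Finsupp.equivFunOnFinite.symm ![m.count D + m.count H1 + 1, m.count U + m.count H2 + 1, 0, 0]

@[simp] lemma statsF_apply0 (w : List BStep) : statsF w 0 = w.count D + w.count H1 := rfl
@[simp] lemma statsF_apply1 (w : List BStep) : statsF w 1 = w.count U + w.count H2 := rfl
@[simp] lemma statsF_apply2 (w : List BStep) : statsF w 2 = h1zero w := rfl
@[simp] lemma statsF_apply3 (w : List BStep) : statsF w 3 = h2zero w := rfl
@[simp] lemma astats_apply0 (w : List BStep) : astats w 0 = w.count D + w.count H1 + 1 := rfl
@[simp] lemma astats_apply1 (w : List BStep) : astats w 1 = w.count U + w.count H2 + 1 := rfl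
@[simp] lemma astats_apply2 (w : List BStep) : astats w 2 = 0 := rfl
@[simp] lemma astats_apply3 (w : List BStep) : astats w 3 = 0 := rfl

def GSet (d : Fin 4 →₀ ℕ) : Set (List BStep) := {w | IsBicoloredGrandMotzkin w ∧ statsF w = d}

def MSet (i j : ℕ) : Set (List BStep) :=
  {w | IsBicoloredMotzkin w ∧ w.count D + w.count H1 = i ∧ w.count U + w.count H2 = j}

def TSet (q : Fin 4 →₀ ℕ) : Set (List BStep) := {m | IsBicoloredMotzkin m ∧ astats m = q}

def Spairs (d : Fin 4 →₀ ℕ) : Set (List BStep × List BStep) :=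
  {mt | IsBicoloredMotzkin mt.1 ∧ IsBicoloredGrandMotzkin mt.2 ∧ statsF mt.2 + astats mt.1 = d}

lemma statsF_eq_iff (w : List BStep) (d : Fin 4 →₀ ℕ) :
    statsF w = d ↔ (w.count D + w.count H1 = d 0 ∧ w.count U + w.count H2 = d 1 ∧
      h1zero w = d 2 ∧ h2zero w = d 3) := by
  constructor
  · rintro rfl; exact ⟨rfl, rfl, rfl, rfl⟩
  · rintro ⟨h0, h1, h2, h3⟩
    ext i
    fin_cases i <;> simpa

lemma length_of_balanced (w : List BStep) (h : w.count U = w.count D) :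
    w.length = (w.count D + w.count H1) + (w.count U + w.count H2) := by
  have := length_eq w; omega

lemma GSet_finite (d : Fin 4 →₀ ℕ) : (GSet d).Finite := by
  apply (List.finite_length_le BStep (d 0 + d 1)).subset
  rintro w ⟨hb, hs⟩
  have h0 : w.count D + w.count H1 = d 0 := by rw [← hs]; rfl
  have h1 : w.count U + w.count H2 = d 1 := by rw [← hs]; rfl
  simp only [Set.mem_setOf_eq]
  rw [length_of_balanced w hb, h0, h1]

lemma MSet_finite (i j : ℕ) : (MSet i j).Finite := by
  apply (List.finite_length_le BStep (i + j)).subset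
  rintro w ⟨hm, h0, h1⟩
  simp only [Set.mem_setOf_eq]
  rw [length_of_balanced w hm.2, h0, h1]

lemma TSet_finite (q : Fin 4 →₀ ℕ) : (TSet q).Finite := by
  apply (List.finite_length_le BStep (q 0 + q 1)).subset
  rintro w ⟨hm, hs⟩
  have h0 : w.count D + w.count H1 + 1 = q 0 := by rw [← hs]; rfl
  have h1 : w.count U + w.count H2 + 1 = q 1 := by rw [← hs]; rfl
  simp only [Set.mem_setOf_eq]
  rw [length_of_balanced w hm.2]; omega

lemma Spairs_finite (d : Fin 4 →₀ ℕ) : (Spairs d).Finite := by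
  apply Set.Finite.subset (Set.Finite.prod (List.finite_length_le BStep (d 0 + d 1))
    (List.finite_length_le BStep (d 0 + d 1)))
  rintro ⟨m, t⟩ ⟨hm, ht, hs⟩
  have h0 : (t.count D + t.count H1) + (m.count D + m.count H1 + 1) = d 0 := by
    rw [← hs]; rfl
  have h1 : (t.count U + t.count H2) + (m.count U + m.count H2 + 1) = d 1 := by
    rw [← hs]; rfl
  constructor <;> simp only [Set.mem_setOf_eq]
  · rw [length_of_balanced m hm.2]; omega
  · rw [length_of_balanced t ht]; omega

lemma statsF_nil : statsF [] = 0 := by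
  ext i; fin_cases i <;> simp [h1zero, h2zero]

lemma mem_GSet_nil_iff (d : Fin 4 →₀ ℕ) : [] ∈ GSet d ↔ d = 0 := by
  constructor
  · rintro ⟨-, hs⟩; rw [← hs, statsF_nil]
  · rintro rfl
    exact ⟨rfl, statsF_nil⟩

lemma GSet_zero : GSet 0 = {[]} := by
  ext w
  constructor
  · rintro ⟨hb, hs⟩
    have h0 : w.count D + w.count H1 = (0 : Fin 4 →₀ ℕ) 0 := by rw [← hs]; rfl
    have h1 : w.count U + w.count H2 = (0 : Fin 4 →₀ ℕ) 1 := by rw [← hs]; rfl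
    have := length_of_balanced w hb
    simp only [Finsupp.coe_zero, Pi.zero_apply] at h0 h1
    have : w.length = 0 := by omega
    simpa [List.length_eq_zero_iff] using this
  · rintro rfl
    exact (mem_GSet_nil_iff 0).2 rfl

/-- the part of `GSet d` with first step `s` -/
def Part (s : BStep) (d : Fin 4 →₀ ℕ) : Set (List BStep) :=
  {w ∈ GSet d | w.head? = some s}

lemma grand_cons_H1 (t : List BStep) :
    IsBicoloredGrandMotzkin (H1 :: t) ↔ IsBicoloredGrandMotzkin t := by
  simp [IsBicoloredGrandMotzkin, List.count_cons]

lemma grand_cons_H2 (t : List BStep) :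
    IsBicoloredGrandMotzkin (H2 :: t) ↔ IsBicoloredGrandMotzkin t := by
  simp [IsBicoloredGrandMotzkin, List.count_cons]

lemma statsF_cons_H1 (t : List BStep) :
    statsF (H1 :: t) = statsF t + (Finsupp.single 2 1 + Finsupp.single 0 1) := by
  ext i
  fin_cases i <;>
    simp [List.count_cons, h1zero_eq, h2zero_eq, gcount_cons, sh, Finsupp.single_apply] <;> omega

lemma statsF_cons_H2 (t : List BStep) :
    statsF (H2 :: t) = statsF t + (Finsupp.single 3 1 + Finsupp.single 1 1) := by
  ext i
  fin_cases i <;>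
    simp [List.count_cons, h1zero_eq, h2zero_eq, gcount_cons, sh, Finsupp.single_apply] <;> omega

lemma ncard_Part_H1 (d : Fin 4 →₀ ℕ) :
    (Part H1 d).ncard = if (Finsupp.single 2 1 + Finsupp.single 0 1 : Fin 4 →₀ ℕ) ≤ d then
      (GSet (d - (Finsupp.single 2 1 + Finsupp.single 0 1))).ncard else 0 := by
  set e : Fin 4 →₀ ℕ := Finsupp.single 2 1 + Finsupp.single 0 1 with he
  split_ifs with hle
  · have : Part H1 d = (fun t => H1 :: t) '' GSet (d - e) := by
      ext w
      constructor
      · rintro ⟨⟨hb, hs⟩, hh⟩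
        obtain ⟨t, rfl⟩ : ∃ t, w = H1 :: t := by
          cases w with
          | nil => simp at hh
          | cons a t => exact ⟨t, by simpa using congrArg (List.cons · t) (by simpa using hh)⟩
        refine ⟨t, ⟨(grand_cons_H1 t).1 hb, ?_⟩, rfl⟩
        rw [statsF_cons_H1] at hs
        exact eq_tsub_of_add_eq hs
      · rintro ⟨t, ⟨hb, hs⟩, rfl⟩
        refine ⟨⟨(grand_cons_H1 t).2 hb, ?_⟩, rfl⟩
        rw [statsF_cons_H1, hs, tsub_add_cancel_of_le hle]
    rw [this, Set.ncard_image_of_injective _ (fun a b h => by simpa using h)]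
  · have : Part H1 d = ∅ := by
      ext w
      simp only [Set.mem_empty_iff_false, iff_false]
      rintro ⟨⟨hb, hs⟩, hh⟩
      obtain ⟨t, rfl⟩ : ∃ t, w = H1 :: t := by
        cases w with
        | nil => simp at hh
        | cons a t => exact ⟨t, by simpa using congrArg (List.cons · t) (by simpa using hh)⟩
      rw [statsF_cons_H1] at hs
      exact hle (hs ▸ le_add_self)
    simp [this]

lemma ncard_Part_H2 (d : Fin 4 →₀ ℕ) :
    (Part H2 d).ncard = if (Finsupp.single 3 1 + Finsupp.single 1 1 : Fin 4 →₀ ℕ) ≤ d then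
      (GSet (d - (Finsupp.single 3 1 + Finsupp.single 1 1))).ncard else 0 := by
  set e : Fin 4 →₀ ℕ := Finsupp.single 3 1 + Finsupp.single 1 1 with he
  split_ifs with hle
  · have : Part H2 d = (fun t => H2 :: t) '' GSet (d - e) := by
      ext w
      constructor
      · rintro ⟨⟨hb, hs⟩, hh⟩
        obtain ⟨t, rfl⟩ : ∃ t, w = H2 :: t := by
          cases w with
          | nil => simp at hh
          | cons a t => exact ⟨t, by simpa using congrArg (List.cons · t) (by simpa using hh)⟩
        refine ⟨t, ⟨(grand_cons_H2 t).1 hb, ?_⟩, rfl⟩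
        rw [statsF_cons_H2] at hs
        exact eq_tsub_of_add_eq hs
      · rintro ⟨t, ⟨hb, hs⟩, rfl⟩
        refine ⟨⟨(grand_cons_H2 t).2 hb, ?_⟩, rfl⟩
        rw [statsF_cons_H2, hs, tsub_add_cancel_of_le hle]
    rw [this, Set.ncard_image_of_injective _ (fun a b h => by simpa using h)]
  · have : Part H2 d = ∅ := by
      ext w
      simp only [Set.mem_empty_iff_false, iff_false]
      rintro ⟨⟨hb, hs⟩, hh⟩
      obtain ⟨t, rfl⟩ : ∃ t, w = H2 :: t := by
        cases w with
        | nil => simp at hh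
        | cons a t => exact ⟨t, by simpa using congrArg (List.cons · t) (by simpa using hh)⟩
      rw [statsF_cons_H2] at hs
      exact hle (hs ▸ le_add_self)
    simp [this]

/-- reflection swapping U and D -/
def rstep : BStep → BStep | U => D | D => U | H1 => H1 | H2 => H2

lemma rstep_invol : Function.Involutive rstep := by intro s; cases s <;> rfl

def rword (w : List BStep) : List BStep := w.map rstep

lemma rword_invol : Function.Involutive rword := by
  intro w
  simp [rword, List.map_map, Function.comp_def, rstep_invol _]

lemma count_rword (a : BStep) (w : List BStep) : (rword w).count (rstep a) = w.count a :=
  List.count_map_of_injective _ _ rstep_invol.injective a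

lemma getD_lt {w : List BStep} {i : ℕ} (h : i < w.length) (a : BStep) : w.getD i a = w[i] := by
  simp [List.getD_eq_getElem?_getD, List.getElem?_eq_getElem h]

lemma h1zero_rword (w : List BStep) : h1zero (rword w) = h1zero w := by
  rw [h1zero, h1zero]
  have hl : (rword w).length = w.length := by simp [rword]
  rw [hl]
  congr 1
  apply Finset.filter_congr
  intro i hi
  have hi' : i < w.length := Finset.mem_range.1 hi
  have hi'' : i < (rword w).length := by omega
  rw [getD_lt hi'', getD_lt hi']
  have hg : (rword w)[i] = rstep w[i] := by simp [rword]
  have ht : (rword w).take i = rword (w.take i) := by simp [rword]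
  rw [hg, ht]
  have hcU : (rword (w.take i)).count U = (w.take i).count D := count_rword D _
  have hcD : (rword (w.take i)).count D = (w.take i).count U := count_rword U _
  rw [hcU, hcD]
  have : rstep w[i] = H1 ↔ w[i] = H1 := by
    cases h : w[i] <;> simp [rstep]
  rw [this]
  constructor <;> intro h <;> exact ⟨h.1, h.2.symm⟩

lemma h2zero_rword (w : List BStep) : h2zero (rword w) = h2zero w := by
  rw [h2zero, h2zero]
  have hl : (rword w).length = w.length := by simp [rword]
  rw [hl]
  congr 1
  apply Finset.filter_congr
  intro i hi
  have hi' : i < w.length := Finset.mem_range.1 hi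
  have hi'' : i < (rword w).length := by omega
  rw [getD_lt hi'', getD_lt hi']
  have hg : (rword w)[i] = rstep w[i] := by simp [rword]
  have ht : (rword w).take i = rword (w.take i) := by simp [rword]
  rw [hg, ht]
  have hcU : (rword (w.take i)).count U = (w.take i).count D := count_rword D _
  have hcD : (rword (w.take i)).count D = (w.take i).count U := count_rword U _
  rw [hcU, hcD]
  have : rstep w[i] = H2 ↔ w[i] = H2 := by
    cases h : w[i] <;> simp [rstep]
  rw [this]
  constructor <;> intro h <;> exact ⟨h.1, h.2.symm⟩

lemma mem_GSet_rword {w : List BStep} {d : Fin 4 →₀ ℕ} (h : w ∈ GSet d) : rword w ∈ GSet d := by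
  obtain ⟨hb, hs⟩ := h
  have hcU : (rword w).count U = w.count D := count_rword D _
  have hcD : (rword w).count D = w.count U := count_rword U _
  have hcH1 : (rword w).count H1 = w.count H1 := count_rword H1 _
  have hcH2 : (rword w).count H2 = w.count H2 := count_rword H2 _
  refine ⟨?_, ?_⟩
  · rw [IsBicoloredGrandMotzkin, hcU, hcD]; exact hb.symm
  · rw [← hs]
    have hb' : List.count U w = List.count D w := hb
    ext i
    fin_cases i <;>
      simp [hcU, hcD, hcH1, hcH2, h1zero_rword, h2zero_rword] <;> omega
lemma Part_D_eq : ∀ d, Part D d = rword '' Part U d := by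
  intro d
  ext w
  constructor
  · rintro ⟨hg, hh⟩
    refine ⟨rword w, ⟨mem_GSet_rword hg, ?_⟩, rword_invol w⟩
    cases w with
    | nil => simp at hh
    | cons a t =>
        have : a = D := by simpa using hh
        subst this
        rfl
  · rintro ⟨v, ⟨hg, hh⟩, rfl⟩
    refine ⟨mem_GSet_rword hg, ?_⟩
    cases v with
    | nil => simp at hh
    | cons a t =>
        have : a = U := by simpa using hh
        subst this
        rfl

lemma ncard_Part_D (d : Fin 4 →₀ ℕ) : (Part D d).ncard = (Part U d).ncard := by
  rw [Part_D_eq, Set.ncard_image_of_injective _ rword_invol.injective]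

lemma sh_cases (s : BStep) : sh s = 1 ∨ sh s = -1 ∨ sh s = 0 := by cases s <;> simp [sh]

lemma sh_eq_neg_one {s : BStep} (h : sh s = -1) : s = D := by cases s <;> simp_all [sh]

lemma hgt_eq_zero_iff (w : List BStep) : hgt w = 0 ↔ w.count U = w.count D := by
  rw [hgt, sub_eq_zero]
  exact_mod_cast Iff.rfl

lemma motzkin_take_nonneg {m : List BStep} (hm : IsBicoloredMotzkin m) (i : ℕ) :
    0 ≤ hgt (m.take i) := by
  have := hm.1 i
  rw [hgt]
  omega

lemma hgt_take_succ (w : List BStep) (i : ℕ) (h : i < w.length) :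
    hgt (w.take (i + 1)) = hgt (w.take i) + sh w[i] := by
  rw [List.take_succ, List.getElem?_eq_getElem h]
  simp only [Option.toList_some]
  rw [hgt_append]
  have : hgt [w[i]] = sh w[i] := by
    rw [show [w[i]] = w[i] :: [] from rfl, hgt_cons, hgt_nil, add_zero]
  rw [this]

def arch (mt : List BStep × List BStep) : List BStep := U :: mt.1 ++ D :: mt.2

lemma arch_grand {m t : List BStep} (hm : m.count U = m.count D) (ht : t.count U = t.count D) :
    IsBicoloredGrandMotzkin (U :: m ++ D :: t) := by
  simp only [IsBicoloredGrandMotzkin, List.count_cons, List.count_append]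
  simp
  omega

lemma arch_gcount {m : List BStep} (hm : IsBicoloredMotzkin m) (t : List BStep) (s0 : BStep)
    (hU : s0 ≠ U) (hD : s0 ≠ D) :
    gcount s0 0 (U :: m ++ D :: t) = gcount s0 0 t := by
  have hm0 : hgt m = 0 := (hgt_eq_zero_iff m).2 hm.2
  have hz : gcount s0 (-1) m = 0 := by
    apply gcount_eq_zero
    intro i
    have := motzkin_take_nonneg hm i
    omega
  rw [List.cons_append, gcount_cons, gcount_append, gcount_cons, hm0]
  simp [sh, hz, Ne.symm hU, Ne.symm hD]

lemma arch_statsF {m : List BStep} (hm : IsBicoloredMotzkin m) (t : List BStep) :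
    statsF (U :: m ++ D :: t) = statsF t + astats m := by
  have h1 : h1zero (U :: (m ++ D :: t)) = h1zero t := by
    rw [h1zero_eq, h1zero_eq]; exact arch_gcount hm t H1 (by simp) (by simp)
  have h2 : h2zero (U :: (m ++ D :: t)) = h2zero t := by
    rw [h2zero_eq, h2zero_eq]; exact arch_gcount hm t H2 (by simp) (by simp)
  rw [statsF_eq_iff]
  refine ⟨?_, ?_, ?_, ?_⟩ <;>
    simp [List.cons_append, List.count_cons, List.count_append, h1, h2, Finsupp.add_apply] <;>
    omega

lemma arch_injOn (d : Fin 4 →₀ ℕ) : Set.InjOn arch (Spairs d) := by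
  have key : ∀ m m' t t' : List BStep, IsBicoloredMotzkin m → IsBicoloredMotzkin m' →
      m ++ D :: t = m' ++ D :: t' → m.length ≤ m'.length → m.length = m'.length := by
    intro m m' t t' hm hm' he hle
    by_contra hne
    have hlt : m.length < m'.length := lt_of_le_of_ne hle hne
    have htake : m = m'.take m.length := by
      have := congrArg (List.take m.length) he
      rwa [List.take_append_of_le_length (le_of_lt hlt),
        show (m ++ D :: t).take m.length = m from List.take_left] at this
    have hget : m'[m.length]'hlt = D := by
      have h1 : (m ++ D :: t)[m.length]'(by simp) = D := by
        rw [List.getElem_append_right (le_refl m.length)]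
        simp
      have h2 := List.getElem_of_eq he (i := m.length) (by simp)
      rw [h1] at h2
      rw [List.getElem_append_left hlt] at h2
      exact h2.symm
    have hh : hgt (m'.take (m.length + 1)) = -1 := by
      rw [hgt_take_succ m' m.length hlt, hget, ← htake, (hgt_eq_zero_iff m).2 hm.2]
      simp [sh]
    have := motzkin_take_nonneg hm' (m.length + 1)
    omega
  rintro ⟨m, t⟩ ⟨hm, ht, -⟩ ⟨m', t'⟩ ⟨hm', ht', -⟩ he
  simp only [arch, List.cons_append, List.cons.injEq, true_and] at he
  have hlen : m.length = m'.length := by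
    rcases le_total m.length m'.length with h | h
    · exact key m m' t t' hm hm' he h
    · exact (key m' m t' t hm' hm he.symm h).symm
  obtain ⟨h1, h2⟩ := List.append_inj he hlen
  simp only [List.cons.injEq, true_and] at h2
  exact Prod.ext h1 h2

lemma Part_U_eq (d : Fin 4 →₀ ℕ) : Part U d = arch '' Spairs d := by
  ext w
  constructor
  · rintro ⟨⟨hb, hs⟩, hh⟩
    obtain ⟨r, rfl⟩ : ∃ r, w = U :: r := by
      cases w with
      | nil => simp at hh
      | cons a t => exact ⟨t, by simpa using congrArg (List.cons · t) (by simpa using hh)⟩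
    have hr : hgt r = -1 := by
      have h0 : hgt (U :: r) = 0 := (hgt_eq_zero_iff _).2 hb
      rw [hgt_cons] at h0
      simp [sh] at h0
      omega
    have hex : ∃ j, hgt (r.take j) = -1 := ⟨r.length, by rwa [List.take_length]⟩
    classical
    set k := Nat.find hex with hkdef
    have hk : hgt (r.take k) = -1 := Nat.find_spec hex
    have hmin : ∀ j, j < k → hgt (r.take j) ≠ -1 := fun j hj => Nat.find_min hex hj
    have hkle : k ≤ r.length := Nat.find_min' hex (by rwa [List.take_length])
    have hk0 : k ≠ 0 := by
      intro h
      rw [h] at hk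
      simp at hk
    have hnonneg : ∀ j, j < k → 0 ≤ hgt (r.take j) := by
      intro j
      induction j with
      | zero => intro _; simp
      | succ j ih =>
          intro hj
          have hjk : j < k := by omega
          have hjr : j < r.length := by omega
          have := ih hjk
          have hstep := hgt_take_succ r j hjr
          have := hmin (j + 1) hj
          rcases sh_cases r[j] with h | h | h <;> omega
    have hk1r : k - 1 < r.length := by omega
    have hsplit : hgt (r.take k) = hgt (r.take (k - 1)) + sh (r[k - 1]'hk1r) := by
      have := hgt_take_succ r (k - 1) hk1r
      rwa [show k - 1 + 1 = k by omega] at this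
    have hprev : 0 ≤ hgt (r.take (k - 1)) := hnonneg (k - 1) (by omega)
    have hshD : sh (r[k - 1]'hk1r) = -1 := by
      rcases sh_cases (r[k - 1]'hk1r) with h | h | h <;>
        first
          | (exfalso; have := hmin (k - 1) (by omega); omega)
          | exact h
    have hgetD : r[k - 1]'hk1r = D := sh_eq_neg_one hshD
    have hprev0 : hgt (r.take (k - 1)) = 0 := by omega
    set m := r.take (k - 1) with hmdef
    set t := r.drop k with htdef
    have hdecomp : r = m ++ D :: t := by
      have h1 : r.take k = m ++ [D] := by
        have := List.take_succ (l := r) (i := k - 1)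
        rw [show k - 1 + 1 = k by omega, List.getElem?_eq_getElem hk1r, hgetD] at this
        simpa using this
      calc r = r.take k ++ r.drop k := (List.take_append_drop k r).symm
        _ = (m ++ [D]) ++ t := by rw [h1]
        _ = m ++ D :: t := by simp
    have hmM : IsBicoloredMotzkin m := by
      constructor
      · intro j
        have htt : m.take j = r.take (min j (k - 1)) := by rw [hmdef, List.take_take]
        have hnn := hnonneg (min j (k - 1)) (by omega)
        rw [← htt, hgt] at hnn
        omega
      · exact (hgt_eq_zero_iff m).1 hprev0
    have htG : IsBicoloredGrandMotzkin t := by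
      have h2 : hgt r = hgt m + hgt [D] + hgt t := by
        rw [hdecomp, show m ++ D :: t = (m ++ [D]) ++ t by simp, hgt_append, hgt_append]
      have hD1 : hgt [D] = -1 := by
        rw [show [D] = D :: ([] : List BStep) from rfl, hgt_cons, hgt_nil]
        simp [sh]
      rw [hr, hprev0, hD1] at h2
      exact (hgt_eq_zero_iff t).1 (by omega)
    refine ⟨(m, t), ⟨hmM, htG, ?_⟩, ?_⟩
    · rw [← arch_statsF hmM t, List.cons_append, ← hdecomp]
      exact hs
    · simp only [arch]
      rw [List.cons_append, ← hdecomp]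
  · rintro ⟨⟨m, t⟩, ⟨hm, ht, hs⟩, rfl⟩
    refine ⟨⟨arch_grand hm.2 ht, ?_⟩, rfl⟩
    rw [arch, arch_statsF hm t]
    exact hs

lemma ncard_Part_U (d : Fin 4 →₀ ℕ) : (Part U d).ncard = (Spairs d).ncard := by
  rw [Part_U_eq, Set.ncard_image_of_injOn (arch_injOn d)]

lemma ncard_Spairs (d : Fin 4 →₀ ℕ) :
    (Spairs d).ncard =
      ∑ pq ∈ Finset.HasAntidiagonal.antidiagonal d, (GSet pq.1).ncard * (TSet pq.2).ncard := by
  classical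
  rw [Set.ncard_eq_toFinset_card _ (Spairs_finite d)]
  rw [Finset.card_eq_sum_card_fiberwise
    (f := fun mt => (statsF mt.2, d - statsF mt.2)) (t := Finset.HasAntidiagonal.antidiagonal d) ?_]
  · apply Finset.sum_congr rfl
    intro pq hpq
    have hpqd : pq.1 + pq.2 = d := Finset.HasAntidiagonal.mem_antidiagonal.1 hpq
    have hfib : ((Spairs_finite d).toFinset.filter
        (fun mt => (statsF mt.2, d - statsF mt.2) = pq)) =
        (TSet_finite pq.2).toFinset ×ˢ (GSet_finite pq.1).toFinset := by
      ext ⟨m, t⟩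
      simp only [Finset.mem_filter, Set.Finite.mem_toFinset, Finset.mem_product, Prod.mk.injEq]
      constructor
      · rintro ⟨⟨hm, ht, hs⟩, heq⟩
        have h1 : statsF t = pq.1 := by rw [← heq]
        refine ⟨⟨hm, ?_⟩, ht, h1⟩
        have h3 : statsF t + astats m = pq.1 + pq.2 := by rw [hs, hpqd]
        rw [h1] at h3
        exact add_left_cancel h3
      · rintro ⟨⟨hm, ha⟩, ht, hteq⟩
        refine ⟨⟨hm, ht, by rw [hteq, ha, hpqd]⟩, ?_⟩
        exact Prod.ext hteq (by rw [hteq, ← hpqd, add_tsub_cancel_left])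
    rw [hfib, Finset.card_product, mul_comm,
      Set.ncard_eq_toFinset_card _ (GSet_finite pq.1), Set.ncard_eq_toFinset_card _ (TSet_finite pq.2)]
  · rintro ⟨m, t⟩ hmt
    rw [Finset.mem_coe, Set.Finite.mem_toFinset] at hmt
    obtain ⟨hm, ht, hs⟩ := hmt
    rw [Finset.mem_coe, Finset.HasAntidiagonal.mem_antidiagonal]
    exact add_tsub_cancel_of_le (le_iff_exists_add.2 ⟨astats m, hs.symm⟩)

lemma Part_disjoint {s s' : BStep} (h : s ≠ s') (d : Fin 4 →₀ ℕ) :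
    Disjoint (Part s d) (Part s' d) := by
  rw [Set.disjoint_left]
  rintro w ⟨-, h1⟩ ⟨-, h2⟩
  rw [h1] at h2
  exact h (by injection h2)

lemma Part_subset (s : BStep) (d : Fin 4 →₀ ℕ) : Part s d ⊆ GSet d := fun w hw => hw.1

lemma GSet_eq_union (d : Fin 4 →₀ ℕ) (hd : d ≠ 0) :
    GSet d = Part H1 d ∪ Part H2 d ∪ Part U d ∪ Part D d := by
  ext w
  constructor
  · intro hw
    cases w with
    | nil => exact absurd ((mem_GSet_nil_iff d).1 hw) hd
    | cons s t =>
        cases s with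
        | U => exact Or.inl (Or.inr ⟨hw, rfl⟩)
        | D => exact Or.inr ⟨hw, rfl⟩
        | H1 => exact Or.inl (Or.inl (Or.inl ⟨hw, rfl⟩))
        | H2 => exact Or.inl (Or.inl (Or.inr ⟨hw, rfl⟩))
  · rintro (((h | h) | h) | h) <;> exact h.1

lemma key (d : Fin 4 →₀ ℕ) :
    (GSet d).ncard = (if d = 0 then 1 else 0)
      + (if (Finsupp.single 2 1 + Finsupp.single 0 1 : Fin 4 →₀ ℕ) ≤ d then
          (GSet (d - (Finsupp.single 2 1 + Finsupp.single 0 1))).ncard else 0)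
      + (if (Finsupp.single 3 1 + Finsupp.single 1 1 : Fin 4 →₀ ℕ) ≤ d then
          (GSet (d - (Finsupp.single 3 1 + Finsupp.single 1 1))).ncard else 0)
      + ∑ pq ∈ Finset.HasAntidiagonal.antidiagonal d, (GSet pq.1).ncard * (2 * (TSet pq.2).ncard) := by
  classical
  by_cases hd : d = 0
  · subst hd
    rw [GSet_zero]
    have hg2 : ¬((Finsupp.single 2 1 + Finsupp.single 0 1 : Fin 4 →₀ ℕ) ≤ 0) := by
      intro h
      have := Finsupp.le_def.1 h 2
      simp [Finsupp.single_apply] at this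
    have hg3 : ¬((Finsupp.single 3 1 + Finsupp.single 1 1 : Fin 4 →₀ ℕ) ≤ 0) := by
      intro h
      have := Finsupp.le_def.1 h 3
      simp [Finsupp.single_apply] at this
    rw [if_pos rfl, if_neg hg2, if_neg hg3]
    have hT : TSet (0 : Fin 4 →₀ ℕ) = ∅ := by
      ext m
      simp only [Set.mem_empty_iff_false, iff_false]
      rintro ⟨-, ha⟩
      have : m.count D + m.count H1 + 1 = (0 : Fin 4 →₀ ℕ) 0 := by rw [← ha]; rfl
      simp at this
    rw [Finsupp.antidiagonal_zero, Finset.sum_singleton, hT]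
    simp
  · have hcover := GSet_eq_union d hd
    have hfin : ∀ s, (Part s d).Finite := fun s => (GSet_finite d).subset (Part_subset s d)
    have hd1 : Disjoint (Part H1 d) (Part H2 d) := Part_disjoint (by simp) d
    have hd2 : Disjoint (Part H1 d ∪ Part H2 d) (Part U d) := by
      rw [Set.disjoint_union_left]
      exact ⟨Part_disjoint (by simp) d, Part_disjoint (by simp) d⟩
    have hd3 : Disjoint (Part H1 d ∪ Part H2 d ∪ Part U d) (Part D d) := by
      rw [Set.disjoint_union_left, Set.disjoint_union_left]
      exact ⟨⟨Part_disjoint (by simp) d, Part_disjoint (by simp) d⟩, Part_disjoint (by simp) d⟩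
    rw [hcover,
      Set.ncard_union_eq hd3 (((hfin H1).union (hfin H2)).union (hfin U)) (hfin D),
      Set.ncard_union_eq hd2 ((hfin H1).union (hfin H2)) (hfin U),
      Set.ncard_union_eq hd1 (hfin H1) (hfin H2),
      ncard_Part_H1, ncard_Part_H2, ncard_Part_D, ncard_Part_U, ncard_Spairs, if_neg hd]
    have hsum : ∑ pq ∈ Finset.HasAntidiagonal.antidiagonal d, (GSet pq.1).ncard * (2 * (TSet pq.2).ncard)
        = (∑ pq ∈ Finset.HasAntidiagonal.antidiagonal d, (GSet pq.1).ncard * (TSet pq.2).ncard)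
          + ∑ pq ∈ Finset.HasAntidiagonal.antidiagonal d, (GSet pq.1).ncard * (TSet pq.2).ncard := by
      rw [← Finset.sum_add_distrib]
      apply Finset.sum_congr rfl
      intro pq _
      ring
    rw [hsum]
    ring

lemma astats_eq_iff (m : List BStep) (q : Fin 4 →₀ ℕ) :
    astats m = q ↔ (m.count D + m.count H1 + 1 = q 0 ∧ m.count U + m.count H2 + 1 = q 1 ∧
      q 2 = 0 ∧ q 3 = 0) := by
  constructor
  · rintro rfl; exact ⟨rfl, rfl, rfl, rfl⟩
  · rintro ⟨h0, h1, h2, h3⟩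
    ext i
    fin_cases i <;> simp_all

lemma GSet_spec (p : Fin 4 →₀ ℕ) :
    {w : List BStep | IsBicoloredGrandMotzkin w ∧
      w.count BStep.D + w.count BStep.H1 = p 0 ∧
      w.count BStep.U + w.count BStep.H2 = p 1 ∧
      h1zero w = p 2 ∧ h2zero w = p 3} = GSet p := by
  ext w
  constructor
  · rintro ⟨hb, h0, h1, h2, h3⟩
    exact ⟨hb, (statsF_eq_iff w p).2 ⟨h0, h1, h2, h3⟩⟩
  · rintro ⟨hb, hs⟩
    rw [statsF_eq_iff] at hs
    exact ⟨hb, hs.1, hs.2.1, hs.2.2.1, hs.2.2.2⟩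

lemma coeffG (p : Fin 4 →₀ ℕ) : MvPowerSeries.coeff p G = ((GSet p).ncard : ℤ) := by
  rw [MvPowerSeries.coeff_apply]
  show (({w : List BStep | IsBicoloredGrandMotzkin w ∧
      w.count BStep.D + w.count BStep.H1 = p 0 ∧
      w.count BStep.U + w.count BStep.H2 = p 1 ∧
      h1zero w = p 2 ∧ h2zero w = p 3}).ncard : ℤ) = _
  rw [GSet_spec]

lemma Fterm (q : Fin 4 →₀ ℕ) :
    (if (Finsupp.single 0 1 + Finsupp.single 1 1 : Fin 4 →₀ ℕ) ≤ q then
      (2 : ℤ) * MvPowerSeries.coeff (q - (Finsupp.single 0 1 + Finsupp.single 1 1)) F else 0)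
      = 2 * ((TSet q).ncard : ℤ) := by
  classical
  set e : Fin 4 →₀ ℕ := Finsupp.single 0 1 + Finsupp.single 1 1 with he
  have he0 : e 0 = 1 := by simp [he, Finsupp.single_apply]
  have he1 : e 1 = 1 := by simp [he, Finsupp.single_apply]
  have he2 : e 2 = 0 := by simp [he, Finsupp.single_apply]
  have he3 : e 3 = 0 := by simp [he, Finsupp.single_apply]
  split_ifs with hle
  · have hq0 : 1 ≤ q 0 := he0 ▸ Finsupp.le_def.1 hle 0
    have hq1 : 1 ≤ q 1 := he1 ▸ Finsupp.le_def.1 hle 1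
    have hset : {w : List BStep | IsBicoloredMotzkin w ∧
        w.count BStep.D + w.count BStep.H1 = (q - e) 0 ∧
        w.count BStep.U + w.count BStep.H2 = (q - e) 1} =
        {w : List BStep | IsBicoloredMotzkin w ∧
        w.count BStep.D + w.count BStep.H1 = q 0 - 1 ∧
        w.count BStep.U + w.count BStep.H2 = q 1 - 1} := by
      ext w
      rw [Set.mem_setOf_eq, Set.mem_setOf_eq, Finsupp.tsub_apply, Finsupp.tsub_apply, he0, he1]
    have hF : MvPowerSeries.coeff (q - e) F =
        if q 2 = 0 ∧ q 3 = 0 then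
          ({w : List BStep | IsBicoloredMotzkin w ∧
            w.count BStep.D + w.count BStep.H1 = q 0 - 1 ∧
            w.count BStep.U + w.count BStep.H2 = q 1 - 1}.ncard : ℤ)
        else 0 := by
      rw [MvPowerSeries.coeff_apply]
      show (if (q - e) 2 = 0 ∧ (q - e) 3 = 0 then
        ({w : List BStep | IsBicoloredMotzkin w ∧
          w.count BStep.D + w.count BStep.H1 = (q - e) 0 ∧
          w.count BStep.U + w.count BStep.H2 = (q - e) 1}.ncard : ℤ) else 0) = _
      rw [hset, Finsupp.tsub_apply, Finsupp.tsub_apply, he2, he3]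
      simp only [Nat.sub_zero]
    rw [hF]
    split_ifs with hq23
    · have hset2 : {w : List BStep | IsBicoloredMotzkin w ∧
          w.count BStep.D + w.count BStep.H1 = q 0 - 1 ∧
          w.count BStep.U + w.count BStep.H2 = q 1 - 1} = TSet q := by
        ext m
        rw [Set.mem_setOf_eq]
        show _ ↔ IsBicoloredMotzkin m ∧ astats m = q
        rw [astats_eq_iff]
        constructor
        · rintro ⟨hm, h0, h1⟩
          exact ⟨hm, by omega, by omega, hq23.1, hq23.2⟩
        · rintro ⟨hm, h0, h1, -, -⟩
          exact ⟨hm, by omega, by omega⟩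
      rw [hset2]
    · have : TSet q = ∅ := by
        ext m
        simp only [Set.mem_empty_iff_false, iff_false]
        rintro ⟨-, ha⟩
        rw [astats_eq_iff] at ha
        exact hq23 ⟨ha.2.2.1, ha.2.2.2⟩
      rw [this]
      simp
  · have : TSet q = ∅ := by
      ext m
      simp only [Set.mem_empty_iff_false, iff_false]
      rintro ⟨-, ha⟩
      rw [astats_eq_iff] at ha
      obtain ⟨h0, h1, h2, h3⟩ := ha
      apply hle
      rw [Finsupp.le_def]
      intro i
      fin_cases i <;> simp [he, Finsupp.single_apply] <;> omega
    rw [this]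
    simp

lemma X20_eq : (MvPowerSeries.X 2 * MvPowerSeries.X 0 : MvPowerSeries (Fin 4) ℤ) =
    MvPowerSeries.monomial (Finsupp.single 2 1 + Finsupp.single 0 1) 1 := by
  rw [MvPowerSeries.X, MvPowerSeries.X, MvPowerSeries.monomial_mul_monomial, one_mul]

lemma X31_eq : (MvPowerSeries.X 3 * MvPowerSeries.X 1 : MvPowerSeries (Fin 4) ℤ) =
    MvPowerSeries.monomial (Finsupp.single 3 1 + Finsupp.single 1 1) 1 := by
  rw [MvPowerSeries.X, MvPowerSeries.X, MvPowerSeries.monomial_mul_monomial, one_mul]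

lemma X01_eq : (2 * MvPowerSeries.X 0 * MvPowerSeries.X 1 : MvPowerSeries (Fin 4) ℤ) =
    MvPowerSeries.monomial (Finsupp.single 0 1 + Finsupp.single 1 1) 2 := by
  have h2 : (2 : MvPowerSeries (Fin 4) ℤ) = MvPowerSeries.monomial (0 : Fin 4 →₀ ℕ) 2 := by
    rw [MvPowerSeries.monomial_zero_eq_C_apply]
    exact (map_ofNat ((MvPowerSeries.C : ℤ →+* MvPowerSeries (Fin 4) ℤ)) 2).symm
  rw [h2, MvPowerSeries.X, MvPowerSeries.X, MvPowerSeries.monomial_mul_monomial,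
    MvPowerSeries.monomial_mul_monomial, zero_add]
  norm_num

end BicolorAux

open BicolorAux

/-- `G·(1 − s1·x − s2·y − 2xy·F) = 1` in `ℤ[[x,y,s1,s2]]`. -/
theorem bicoloredGrandMotzkin_gf :
    G * (1 - MvPowerSeries.X 2 * MvPowerSeries.X 0 - MvPowerSeries.X 3 * MvPowerSeries.X 1
      - 2 * MvPowerSeries.X 0 * MvPowerSeries.X 1 * F) = 1 := by
  classical
  have hexp : G * (1 - MvPowerSeries.X 2 * MvPowerSeries.X 0
      - MvPowerSeries.X 3 * MvPowerSeries.X 1 - 2 * MvPowerSeries.X 0 * MvPowerSeries.X 1 * F)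
      = G - G * (MvPowerSeries.X 2 * MvPowerSeries.X 0)
        - G * (MvPowerSeries.X 3 * MvPowerSeries.X 1)
        - G * ((2 * MvPowerSeries.X 0 * MvPowerSeries.X 1) * F) := by ring
  rw [hexp, X20_eq, X31_eq, X01_eq]
  apply MvPowerSeries.ext
  intro d
  rw [map_sub, map_sub, map_sub, MvPowerSeries.coeff_one,
    MvPowerSeries.coeff_mul_monomial, MvPowerSeries.coeff_mul_monomial,
    MvPowerSeries.coeff_mul]
  have hsum : ∑ pq ∈ Finset.HasAntidiagonal.antidiagonal d, MvPowerSeries.coeff pq.1 G *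
        MvPowerSeries.coeff pq.2
          (MvPowerSeries.monomial (Finsupp.single 0 1 + Finsupp.single 1 1) 2 * F)
      = ∑ pq ∈ Finset.HasAntidiagonal.antidiagonal d,
          ((GSet pq.1).ncard : ℤ) * (2 * ((TSet pq.2).ncard : ℤ)) := by
    apply Finset.sum_congr rfl
    intro pq _
    rw [coeffG, MvPowerSeries.coeff_monomial_mul, Fterm]
  rw [hsum, coeffG, coeffG, coeffG]
  have hkeyZ := congrArg (fun n : ℕ => (n : ℤ)) (key d)
  push_cast at hkeyZ
  simp only [mul_one]
  rw [hkeyZ]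
  ring
end

section
/- For all n ≥ 0 and k ≥ 0, the number of grand Dyck paths P ∈ 𝒢_n with ds(P) = k equals the number of bicolored grand Motzkin paths M of length n with h1⁰(M) + h2⁰(M) = k. -/
/-- The height of the lattice path encoded by `w` (with `true = U`, `false = D`) after `j` steps. -/
def ht (w : List Bool) (j : ℕ) : ℤ :=
  ((w.take j).count true : ℤ) - ((w.take j).count false : ℤ)

/-- A grand Dyck path of semilength `n`. -/
def IsGrandDyck (n : ℕ) (w : List Bool) : Prop :=
  w.length = 2 * n ∧ w.count true = n

/-- The degree of symmetry of a grand Dyck path of semilength `n`: the number of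
`i ∈ {1,…,n}` such that `h_{i−1} = h_{2n+1−i}` and `h_i = h_{2n−i}`. -/
def dsGD (n : ℕ) (w : List Bool) : ℕ :=
  ((Finset.Icc 1 n).filter fun i =>
    ht w (i - 1) = ht w (2 * n + 1 - i) ∧ ht w i = ht w (2 * n - i)).card

namespace GDaux

open BStep

/-- First-half letter of the folded path. -/
def fL : BStep → Bool
  | .U => true | .H1 => true | .D => false | .H2 => false

/-- Second-half letter of the folded path. -/
def fR : BStep → Bool
  | .U => true | .H2 => true | .D => false | .H1 => false

/-- Combine two booleans into a bicolored Motzkin step. -/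
def pb : Bool → Bool → BStep
  | true, true => .U | true, false => .H1 | false, true => .H2 | false, false => .D

/-- Unfold a bicolored grand Motzkin path into a grand Dyck path. -/
def Phi (m : List BStep) : List Bool := m.map fL ++ (m.map fR).reverse

/-- Fold a grand Dyck path into a bicolored grand Motzkin path. -/
def Psi (w : List Bool) : List BStep :=
  List.zipWith pb (w.take (w.length / 2)) ((w.drop (w.length / 2)).reverse)

lemma pb_fL_fR (x : BStep) : pb (fL x) (fR x) = x := by cases x <;> rfl

lemma fL_pb (a b : Bool) : fL (pb a b) = a := by cases a <;> cases b <;> rfl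

lemma fR_pb (a b : Bool) : fR (pb a b) = b := by cases a <;> cases b <;> rfl

lemma countL_true (l : List BStep) : (l.map fL).count true = l.count U + l.count H1 := by
  induction l with
  | nil => simp
  | cons a t ih => cases a <;> simp [fL, List.count_cons, ih] <;> omega

lemma countR_true (l : List BStep) : (l.map fR).count true = l.count U + l.count H2 := by
  induction l with
  | nil => simp
  | cons a t ih => cases a <;> simp [fR, List.count_cons, ih] <;> omega

lemma count_four (l : List BStep) :
    l.count U + l.count D + l.count H1 + l.count H2 = l.length := by
  induction l with
  | nil => simp
  | cons a t ih => cases a <;> simp [List.count_cons] <;> omega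

lemma Phi_length (m : List BStep) : (Phi m).length = 2 * m.length := by
  simp [Phi]; omega

lemma Phi_count_true (m : List BStep) :
    (Phi m).count true = 2 * m.count U + m.count H1 + m.count H2 := by
  simp only [Phi, List.count_append, List.count_reverse, countL_true, countR_true]
  omega

lemma ht_eq (w : List Bool) (j : ℕ) (h : j ≤ w.length) :
    ht w j = 2 * ((w.take j).count true : ℤ) - j := by
  have h1 : (w.take j).count true + (w.take j).count false = j := by
    rw [List.count_true_add_count_false, List.length_take]; omega
  unfold ht; omega

lemma Phi_take_left (m : List BStep) (j : ℕ) (hj : j ≤ m.length) :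
    ((Phi m).take j).count true = (m.take j).count U + (m.take j).count H1 := by
  rw [Phi, List.take_append]
  have h1 : j - (m.map fL).length = 0 := by simp; omega
  rw [h1, List.take_zero, List.append_nil, ← List.map_take, countL_true]

lemma Phi_take_right (m : List BStep) (j : ℕ) (hj : j ≤ m.length) :
    ((Phi m).take (2 * m.length - j)).count true
      + ((m.take j).count U + (m.take j).count H2)
      = 2 * m.count U + m.count H1 + m.count H2 := by
  have hsplit : 2 * m.length - j = (m.map fL).length + (m.length - j) := by simp; omega
  rw [Phi, hsplit, List.take_length_add_append, List.count_append]
  have hrev : ((m.map fR).reverse.drop (m.length - j)) = ((m.map fR).take j).reverse := by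
    rw [List.reverse_take]
    congr 1
    simp
  have hcnt : ((m.map fR).reverse.take (m.length - j)).count true
      + ((m.map fR).reverse.drop (m.length - j)).count true = (m.map fR).count true := by
    conv_rhs => rw [← List.count_reverse,
      ← List.take_append_drop (m.length - j) (m.map fR).reverse, List.count_append]
  rw [hrev, List.count_reverse, ← List.map_take] at hcnt
  rw [countL_true, countR_true, countR_true] at *
  omega

/-- The key height identity: mirror-symmetry at position `j` corresponds to the folded
path being at height `0` after `j` steps. -/
lemma ht_iff (m : List BStep) (hbal : m.count U = m.count D) (j : ℕ) (hj : j ≤ m.length) :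
    (ht (Phi m) j = ht (Phi m) (2 * m.length - j)) ↔
      ((m.take j).count U = (m.take j).count D) := by
  have hlen : (Phi m).length = 2 * m.length := Phi_length m
  have h1 := ht_eq (Phi m) j (by omega)
  have h2 := ht_eq (Phi m) (2 * m.length - j) (by omega)
  have h3 := Phi_take_left m j hj
  have h4 := Phi_take_right m j hj
  have h5 := count_four (m.take j)
  have h6 := count_four m
  have h7 : (m.take j).length = j := by rw [List.length_take]; omega
  rw [h1, h2, h3]
  constructor <;> intro h <;> omega

lemma take_succ_count (m : List BStep) (j : ℕ) (hj : j < m.length) (x : BStep) :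
    (m.take (j + 1)).count x
      = (m.take j).count x + if m.getD j BStep.U = x then 1 else 0 := by
  rw [List.take_succ, List.count_append, List.getElem?_eq_getElem hj,
    List.getD_eq_getElem m BStep.U hj]
  simp [List.count_singleton']

lemma cond_iff (m : List BStep) (j : ℕ) (hj : j < m.length) :
    ((m.take j).count U = (m.take j).count D
        ∧ (m.take (j + 1)).count U = (m.take (j + 1)).count D)
      ↔ ((m.getD j BStep.U = H1 ∨ m.getD j BStep.U = H2)
        ∧ (m.take j).count U = (m.take j).count D) := by
  have h1 := take_succ_count m j hj U
  have h2 := take_succ_count m j hj D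
  rcases hg : m.getD j BStep.U with _ | _ | _ | _ <;>
    rw [hg] at h1 h2 <;> simp only [reduceCtorEq, if_true, if_false, reduceIte] at h1 h2 <;>
    simp [hg] <;> omega

theorem stat_eq (m : List BStep) (hbal : m.count U = m.count D) :
    dsGD m.length (Phi m) = h1zero m + h2zero m := by
  have hfilter : dsGD m.length (Phi m) = ((Finset.Icc 1 m.length).filter fun i =>
      (m.take (i - 1)).count U = (m.take (i - 1)).count D
        ∧ (m.take i).count U = (m.take i).count D).card := by
    rw [dsGD]
    congr 1
    apply Finset.filter_congr
    intro i hi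
    simp only [Finset.mem_Icc] at hi
    have e1 : 2 * m.length + 1 - i = 2 * m.length - (i - 1) := by omega
    rw [e1, ht_iff m hbal (i - 1) (by omega), ht_iff m hbal i (by omega)]
  rw [hfilter]
  have hbij : ((Finset.Icc 1 m.length).filter fun i =>
      (m.take (i - 1)).count U = (m.take (i - 1)).count D
        ∧ (m.take i).count U = (m.take i).count D).card
      = ((Finset.range m.length).filter fun j =>
      (m.getD j BStep.U = H1 ∨ m.getD j BStep.U = H2)
        ∧ (m.take j).count U = (m.take j).count D).card := by
    apply Finset.card_bij (fun i _ => i - 1)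
    · intro i hi
      simp only [Finset.mem_filter, Finset.mem_Icc] at hi
      obtain ⟨⟨hi1, hi2⟩, hc⟩ := hi
      simp only [Finset.mem_filter, Finset.mem_range]
      refine ⟨by omega, ?_⟩
      have e : i = (i - 1) + 1 := by omega
      rw [e] at hc
      exact (cond_iff m (i - 1) (by omega)).mp hc
    · intro a ha b hb hab
      simp only [Finset.mem_filter, Finset.mem_Icc] at ha hb
      omega
    · intro j hj
      simp only [Finset.mem_filter, Finset.mem_range] at hj
      refine ⟨j + 1, ?_, by omega⟩
      simp only [Finset.mem_filter, Finset.mem_Icc, Nat.add_sub_cancel]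
      exact ⟨⟨by omega, by omega⟩, (cond_iff m j hj.1).mpr hj.2⟩
  rw [hbij, h1zero, h2zero]
  rw [← Finset.card_union_of_disjoint (by
    rw [Finset.disjoint_left]
    intro a ha hb
    simp only [Finset.mem_filter] at ha hb
    have h1 := ha.2.1
    have h2 := hb.2.1
    rw [h1] at h2
    exact BStep.noConfusion h2)]
  congr 1
  ext j
  simp only [Finset.mem_union, Finset.mem_filter]
  tauto

lemma zip_map_fL (A B : List Bool) (h : A.length = B.length) :
    (List.zipWith pb A B).map fL = A := by
  induction A generalizing B with
  | nil => simp
  | cons a A ih =>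
    cases B with
    | nil => simp at h
    | cons b B => simp [fL_pb, ih B (by simpa using h)]

lemma zip_map_fR (A B : List Bool) (h : A.length = B.length) :
    (List.zipWith pb A B).map fR = B := by
  induction A generalizing B with
  | nil => cases B with
    | nil => simp
    | cons b B => simp at h
  | cons a A ih =>
    cases B with
    | nil => simp at h
    | cons b B => simp [fR_pb, ih B (by simpa using h)]

lemma zip_self (m : List BStep) : List.zipWith pb (m.map fL) (m.map fR) = m := by
  induction m with
  | nil => rfl
  | cons a t ih => simp [pb_fL_fR, ih]

lemma PsiPhi (m : List BStep) : Psi (Phi m) = m := by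
  rw [Psi, Phi_length]
  have h2 : 2 * m.length / 2 = m.length := by omega
  rw [h2, Phi, List.take_left' (by simp), List.drop_left' (by simp),
    List.reverse_reverse, zip_self]

lemma Phi_injective : Function.Injective Phi :=
  Function.LeftInverse.injective PsiPhi

lemma PhiPsi (w : List Bool) (n : ℕ) (hlen : w.length = 2 * n) : Phi (Psi w) = w := by
  rw [Psi, hlen]
  have h2 : 2 * n / 2 = n := by omega
  rw [h2, Phi,
    zip_map_fL _ _ (by simp [hlen]; omega),
    zip_map_fR _ _ (by simp [hlen]; omega),
    List.reverse_reverse, List.take_append_drop]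

lemma Phi_grandDyck (m : List BStep) (n : ℕ) (hbal : m.count U = m.count D)
    (hlen : m.length = n) : IsGrandDyck n (Phi m) := by
  have h6 := count_four m
  refine ⟨by rw [Phi_length, hlen], ?_⟩
  rw [Phi_count_true]
  omega

lemma of_Phi_grandDyck (m : List BStep) (n : ℕ) (h : IsGrandDyck n (Phi m)) :
    m.count U = m.count D ∧ m.length = n := by
  obtain ⟨h1, h2⟩ := h
  rw [Phi_length] at h1
  rw [Phi_count_true] at h2
  have h6 := count_four m
  exact ⟨by omega, by omega⟩

end GDaux

/-- The number of grand Dyck paths of semilength `n` with degree of symmetry `k` equals the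
number of bicolored grand Motzkin paths of length `n` with `h1⁰ + h2⁰ = k`. -/
theorem grandDyck_ds_eq_bicoloredGrandMotzkin (n k : ℕ) :
    {w : List Bool | IsGrandDyck n w ∧ dsGD n w = k}.ncard
      = {m : List BStep | IsBicoloredGrandMotzkin m ∧ m.length = n
          ∧ h1zero m + h2zero m = k}.ncard := by
  have key : {w : List Bool | IsGrandDyck n w ∧ dsGD n w = k}
      = GDaux.Phi '' {m : List BStep | IsBicoloredGrandMotzkin m ∧ m.length = n
          ∧ h1zero m + h2zero m = k} := by
    ext w
    simp only [Set.mem_setOf_eq, Set.mem_image]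
    constructor
    · rintro ⟨hgd, hds⟩
      refine ⟨GDaux.Psi w, ?_, GDaux.PhiPsi w n hgd.1⟩
      have hphi : GDaux.Phi (GDaux.Psi w) = w := GDaux.PhiPsi w n hgd.1
      have hgd' : IsGrandDyck n (GDaux.Phi (GDaux.Psi w)) := by rw [hphi]; exact hgd
      obtain ⟨hbal, hlen⟩ := GDaux.of_Phi_grandDyck _ _ hgd'
      refine ⟨hbal, hlen, ?_⟩
      have := GDaux.stat_eq (GDaux.Psi w) hbal
      rw [hlen, hphi] at this
      rw [← this, hds]
    · rintro ⟨m, ⟨hbal, hlen, hstat⟩, rfl⟩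
      refine ⟨GDaux.Phi_grandDyck m n hbal hlen, ?_⟩
      have := GDaux.stat_eq m hbal
      rw [hlen] at this
      rw [this, hstat]
  rw [key, Set.ncard_image_of_injective _ GDaux.Phi_injective]
end

section
/- For all n ≥ 0 and k ≥ 0, the number of grand Dyck paths P ∈ 𝒢_n with sv(P) = k equals the number of grand Dyck paths P ∈ 𝒢_n with ret(P) = k; that is, the statistics sv and ret are equidistributed on 𝒢_n. -/
/-- The number of symmetric vertices of a grand Dyck path of semilength `n`:
`sv(P) = #{i ∈ {0,…,n−1} : h_i = h_{2n−i}}`. -/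
def svGD (n : ℕ) (w : List Bool) : ℕ :=
  ((Finset.range n).filter fun i => ht w i = ht w (2 * n - i)).card

/-- The number of returns of a grand Dyck path of semilength `n`:
`ret(P) = #{i ∈ {1,…,2n} : h_i = 0}`. -/
def retGD (n : ℕ) (w : List Bool) : ℕ :=
  ((Finset.Icc 1 (2 * n)).filter fun i => ht w i = 0).card

/-! ### Auxiliary machinery -/

namespace GDaux

/-- Value of a step. -/
def val (b : Bool) : ℤ := if b then 1 else -1

/-- Signed sum of a word. -/
def S (w : List Bool) : ℤ := (w.map val).sum

lemma S_nil : S [] = 0 := rfl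

lemma S_cons (b : Bool) (l : List Bool) : S (b :: l) = val b + S l := by
  simp [S]

lemma S_append (a b : List Bool) : S (a ++ b) = S a + S b := by
  simp [S]

lemma S_reverse (l : List Bool) : S l.reverse = S l := by
  simp [S, List.sum_reverse]

lemma S_eq_counts (l : List Bool) :
    S l = (l.count true : ℤ) - (l.count false : ℤ) := by
  induction l with
  | nil => simp [S]
  | cons b t ih =>
    rw [S_cons, ih]
    cases b <;> simp [val, List.count_cons] <;> ring

lemma ht_eq_S (w : List Bool) (j : ℕ) : ht w j = S (w.take j) := by
  rw [ht, S_eq_counts]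

lemma two_count_eq (l : List Bool) :
    2 * (l.count true : ℤ) = S l + l.length := by
  have h : l.count true + l.count false = l.length := by
    have := l.length_eq_countP_add_countP (· = true)
    simpa [List.count, eq_comm] using this.symm
  rw [S_eq_counts]
  have : (l.count true : ℤ) + (l.count false : ℤ) = l.length := by exact_mod_cast h
  linarith

lemma count_add_count (l : List Bool) : l.count true + l.count false = l.length := by
  have := l.length_eq_countP_add_countP (· = true)
  simpa [List.count, eq_comm] using this.symm

/-- Interleave two lists. -/
def itl : List Bool → List Bool → List Bool
  | [], _ => []
  | _, [] => []
  | a :: as, b :: bs => a :: b :: itl as bs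

/-- De-interleave a list. -/
def ditl : List Bool → List Bool × List Bool
  | a :: b :: l => ((ditl l).1.cons a, (ditl l).2.cons b)
  | _ => ([], [])

lemma itl_length : ∀ (a b : List Bool), a.length = b.length →
    (itl a b).length = 2 * a.length
  | [], _, _ => by simp [itl]
  | a :: as, [], h => by simp at h
  | a :: as, b :: bs, h => by
    simp only [List.length_cons] at h
    simp [itl, itl_length as bs (by omega)]; omega

lemma itl_count (c : Bool) : ∀ (a b : List Bool), a.length = b.length →
    (itl a b).count c = a.count c + b.count c
  | [], [], _ => by simp [itl]
  | [], b :: bs, h => by simp at h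
  | a :: as, [], h => by simp at h
  | a :: as, b :: bs, h => by
    simp only [List.length_cons] at h
    simp [itl, List.count_cons, itl_count c as bs (by omega)]
    ring

lemma ditl_itl : ∀ (a b : List Bool), a.length = b.length →
    ditl (itl a b) = (a, b)
  | [], [], _ => by simp [itl, ditl]
  | [], b :: bs, h => by simp at h
  | a :: as, [], h => by simp at h
  | a :: as, b :: bs, h => by
    simp only [List.length_cons] at h
    simp [itl, ditl, ditl_itl as bs (by omega)]

lemma itl_ditl : ∀ (m : ℕ) (l : List Bool), l.length = 2 * m →
    itl (ditl l).1 (ditl l).2 = l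
  | 0, [], _ => by simp [ditl, itl]
  | 0, a :: l, h => by simp at h
  | m + 1, [], h => by simp at h
  | m + 1, [a], h => by simp at h; omega
  | m + 1, a :: b :: l, h => by
    simp only [List.length_cons] at h
    simp [ditl, itl, itl_ditl m l (by omega)]

lemma ditl_length : ∀ (m : ℕ) (l : List Bool), l.length = 2 * m →
    (ditl l).1.length = m ∧ (ditl l).2.length = m
  | 0, [], _ => by simp [ditl]
  | 0, a :: l, h => by simp at h
  | m + 1, [], h => by simp at h
  | m + 1, [a], h => by simp at h; omega
  | m + 1, a :: b :: l, h => by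
    simp only [List.length_cons] at h
    have := ditl_length m l (by omega)
    simp [ditl, this.1, this.2]

lemma take_itl : ∀ (i : ℕ) (a b : List Bool),
    (itl a b).take (2 * i) = itl (a.take i) (b.take i)
  | 0, a, b => by cases a <;> cases b <;> simp [itl]
  | i + 1, [], b => by simp [itl]
  | i + 1, a :: as, [] => by simp [itl]
  | i + 1, a :: as, b :: bs => by
    have h2 : 2 * (i + 1) = (2 * i) + 1 + 1 := by ring
    simp [itl, h2, take_itl i as bs]

lemma S_itl : ∀ (a b : List Bool), a.length = b.length →
    S (itl a b) = S a + S b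
  | [], [], _ => by simp [itl, S]
  | [], b :: bs, h => by simp at h
  | a :: as, [], h => by simp at h
  | a :: as, b :: bs, h => by
    simp only [List.length_cons] at h
    rw [show itl (a :: as) (b :: bs) = a :: b :: itl as bs from rfl,
      S_cons, S_cons, S_cons, S_cons, S_itl as bs (by omega)]
    ring

/-- Sum of a prefix of the reverse. -/
lemma S_take_reverse (l : List Bool) (i : ℕ) (hi : i ≤ l.length) :
    S (l.reverse.take i) = S l - S (l.take (l.length - i)) := by
  set m := l.length - i with hm
  have hsplit : l = l.take m ++ l.drop m := (List.take_append_drop m l).symm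
  have hlen : (l.drop m).reverse.length = i := by
    simp [List.length_drop]; omega
  have h1 : l.reverse.take i = (l.drop m).reverse := by
    conv_lhs => rw [hsplit]
    rw [List.reverse_append, List.take_left' hlen]
  rw [h1, S_reverse]
  have h2 : S l = S (l.take m) + S (l.drop m) := by
    conv_lhs => rw [hsplit]
    rw [S_append]
  linarith

/-- The forward bijection. -/
def f (n : ℕ) (w : List Bool) : List Bool := itl (w.take n) ((w.drop n).reverse)

/-- The inverse bijection. -/
def g (w : List Bool) : List Bool := (ditl w).1 ++ (ditl w).2.reverse

lemma f_length {n : ℕ} {w : List Bool} (h : w.length = 2 * n) :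
    (f n w).length = 2 * n := by
  rw [f, itl_length]
  · simp [List.length_take, h]; omega
  · simp [List.length_take, List.length_drop, h]; omega

lemma f_count {n : ℕ} {w : List Bool} (h : w.length = 2 * n) (c : Bool) :
    (f n w).count c = w.count c := by
  rw [f, itl_count]
  · rw [List.count_reverse]
    conv_rhs => rw [← List.take_append_drop n w]
    rw [List.count_append]
  · simp [List.length_take, List.length_drop, h]; omega

lemma g_f {n : ℕ} {w : List Bool} (h : w.length = 2 * n) : g (f n w) = w := by
  rw [f, g, ditl_itl]
  · simp
  · simp [List.length_take, List.length_drop, h]; omega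

lemma f_g {n : ℕ} {w : List Bool} (h : w.length = 2 * n) : f n (g w) = w := by
  have hd := ditl_length n w h
  rw [f, g, List.take_left' hd.1, List.drop_left' hd.1, List.reverse_reverse,
    itl_ditl n w h]

/-- Key height identity: for a grand Dyck path `w`, the height of `f n w`
after `2*i` steps is `ht w i - ht w (2n - i)`. -/
lemma ht_f {n : ℕ} {w : List Bool} (hlen : w.length = 2 * n)
    (hcnt : w.count true = n) {i : ℕ} (hi : i ≤ n) :
    ht (f n w) (2 * i) = ht w i - ht w (2 * n - i) := by
  have hS : S w = 0 := by
    rw [S_eq_counts, hcnt]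
    have h : w.count true + w.count false = w.length := by
      have := w.length_eq_countP_add_countP (· = true)
      simpa [List.count, eq_comm] using this.symm
    have : w.count false = n := by omega
    rw [this]; ring
  have hdlen : (w.drop n).length = n := by simp [hlen]; omega
  rw [ht_eq_S, f, take_itl, List.take_take, min_eq_left hi]
  have h1 : ((w.drop n).reverse).take i = (w.drop n).reverse.take i := rfl
  have h2 : S ((w.drop n).reverse.take i)
      = S (w.drop n) - S ((w.drop n).take (n - i)) := by
    rw [S_take_reverse _ i (by omega), hdlen]
  have h3 : (w.drop n).take (n - i) = (w.take (2 * n - i)).drop n := by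
    rw [List.drop_take]
    congr 1
    omega
  have h4 : S (w.take (2 * n - i)) = S (w.take n) + S ((w.take (2 * n - i)).drop n) := by
    conv_lhs => rw [← List.take_append_drop n (w.take (2 * n - i))]
    rw [S_append, List.take_take, min_eq_left (by omega)]
  have h5 : S w = S (w.take n) + S (w.drop n) := by
    conv_lhs => rw [← List.take_append_drop n w]
    rw [S_append]
  rw [S_itl _ _ (by simp [List.length_take, hlen]; omega), h2, h3,
    ht_eq_S, ht_eq_S]
  linarith

/-- Heights have the parity of the number of steps (for indices within the path). -/
lemma ht_zero_even {w : List Bool} {j : ℕ} (hj : j ≤ w.length) (h : ht w j = 0) :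
    2 ∣ j := by
  have h2 := two_count_eq (w.take j)
  rw [← ht_eq_S, h] at h2
  have hl : (w.take j).length = j := by simp [hj]
  rw [hl] at h2
  have : 2 ∣ (j : ℤ) := ⟨w.take j |>.count true, by linarith⟩
  exact_mod_cast this

end GDaux

open GDaux in
/-- `sv` of `w` equals `ret` of `f n w` for grand Dyck `w`. -/
lemma sv_eq_ret_f {n : ℕ} {w : List Bool} (hlen : w.length = 2 * n)
    (hcnt : w.count true = n) : svGD n w = retGD n (f n w) := by
  have hflen : (f n w).length = 2 * n := f_length hlen
  have hfcnt : (f n w).count true = n := by rw [f_count hlen]; exact hcnt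
  -- ret of f n w equals count over even indices
  have key : ∀ i ≤ n, (ht (f n w) (2 * i) = 0 ↔ ht w i = ht w (2 * n - i)) := by
    intro i hi
    rw [ht_f hlen hcnt hi, sub_eq_zero]
  set Q : ℕ → Prop := fun i => ht (f n w) (2 * i) = 0 with hQ
  have hret : retGD n (f n w)
      = ((Finset.Icc 1 n).filter fun i => ht (f n w) (2 * i) = 0).card := by
    rw [retGD]
    apply Finset.card_nbij' (fun j => j / 2) (fun i => 2 * i)
    · intro j hj
      simp only [Finset.mem_coe, Finset.mem_filter, Finset.mem_Icc] at hj ⊢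
      obtain ⟨⟨h1, h2⟩, h3⟩ := hj
      have hev : 2 ∣ j := ht_zero_even (by omega) h3
      obtain ⟨m, rfl⟩ := hev
      refine ⟨⟨by omega, by omega⟩, ?_⟩
      rw [show 2 * (2 * m / 2) = 2 * m by omega]
      exact h3
    · intro i hi
      simp only [Finset.mem_coe, Finset.mem_filter, Finset.mem_Icc] at hi ⊢
      exact ⟨⟨by omega, by omega⟩, hi.2⟩
    · intro j hj
      simp only [Finset.mem_coe, Finset.mem_filter, Finset.mem_Icc] at hj
      have hev : 2 ∣ j := ht_zero_even (by omega) hj.2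
      show 2 * (j / 2) = j
      omega
    · intro i _
      show 2 * i / 2 = i
      omega
  have hsv : svGD n w
      = ((Finset.range n).filter fun i => ht (f n w) (2 * i) = 0).card := by
    rw [svGD]
    congr 1
    apply Finset.filter_congr
    intro i hi
    rw [Finset.mem_range] at hi
    exact ((key i (by omega)).symm)
  rw [hret, hsv]
  -- Now show the two filtered counts agree, using Q 0 and Q n.
  have hQ0 : ht (f n w) (2 * 0) = 0 := by simp [ht]
  have hQn : ht (f n w) (2 * n) = 0 := by
    have hcf : (f n w).count false = n := by
      have := count_add_count (f n w)
      omega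
    rw [ht, List.take_of_length_le (le_of_eq hflen), hfcnt, hcf]
    ring
  rcases Nat.eq_zero_or_pos n with rfl | hn
  · norm_num
  · have h1 : Finset.range n = insert 0 (Finset.Ico 1 n) := by
      rw [Finset.range_eq_Ico]
      ext x
      simp [Finset.mem_Ico, Finset.mem_insert]
      omega
    have h2 : Finset.Icc 1 n = insert n (Finset.Ico 1 n) := by
      ext x
      simp [Finset.mem_Ico, Finset.mem_Icc, Finset.mem_insert]
      omega
    rw [h1, h2, Finset.filter_insert, Finset.filter_insert, if_pos hQ0, if_pos hQn,
      Finset.card_insert_of_notMem (by simp), Finset.card_insert_of_notMem (by simp)]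

/-- The statistics `sv` and `ret` are equidistributed on grand Dyck paths of semilength `n`. -/
theorem grandDyck_sv_ret_equidistributed (n k : ℕ) :
    {w : List Bool | IsGrandDyck n w ∧ svGD n w = k}.ncard
      = {w : List Bool | IsGrandDyck n w ∧ retGD n w = k}.ncard := by
  classical
  set A := {w : List Bool | IsGrandDyck n w ∧ svGD n w = k} with hA
  set B := {w : List Bool | IsGrandDyck n w ∧ retGD n w = k} with hB
  have hmapsf : Set.MapsTo (GDaux.f n) A B := by
    rintro w ⟨⟨hlen, hcnt⟩, hsv⟩
    refine ⟨⟨GDaux.f_length hlen, ?_⟩, ?_⟩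
    · rw [GDaux.f_count hlen]; exact hcnt
    · rw [← sv_eq_ret_f hlen hcnt]; exact hsv
  have hmapsg : Set.MapsTo GDaux.g B A := by
    rintro w' ⟨⟨hlen, hcnt⟩, hret⟩
    have hglen : (GDaux.g w').length = 2 * n := by
      rw [GDaux.g]
      have := GDaux.ditl_length n w' hlen
      simp [this.1, this.2]; ring
    have hgcnt : (GDaux.g w').count true = n := by
      have hfg : GDaux.f n (GDaux.g w') = w' := GDaux.f_g hlen
      have := GDaux.f_count hglen true
      rw [hfg] at this
      omega
    refine ⟨⟨hglen, hgcnt⟩, ?_⟩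
    rw [sv_eq_ret_f hglen hgcnt, GDaux.f_g hlen]
    exact hret
  have hinv : Set.InvOn GDaux.g (GDaux.f n) A B :=
    ⟨fun w hw => GDaux.g_f hw.1.1, fun w' hw' => GDaux.f_g hw'.1.1⟩
  have hbij : Set.BijOn (GDaux.f n) A B := hinv.bijOn hmapsf hmapsg
  rw [← hbij.image_eq, Set.ncard_image_of_injOn hbij.injOn]
end

section
/- For n ≥ 1 and k ≥ 0, let p(n,k) be the number of partitions λ with max(λ_1,λ'_1) = n and ds(λ) = k, and let g(n,k) be the number of grand Dyck paths P ∈ 𝒢_n with ds(P) = k. Then p(n,k) = g(n,k) − g(n−1,k−1), where g(n−1,−1) is interpreted as 0. (Equivalently, Σ_λ s^{ds(λ)} z^{max(λ_1,λ'_1)} = (1−sz)·Σ_{n,k} g(n,k) s^k z^n = (1−sz)/(2(1−s)z + √(1−4z)).) -/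
/-- A partition fitting in the `n × n` square, encoded as its zero-padded part sequence:
an antitone function `f : Fin n → ℕ` with all values at most `n`. -/
def IsBoxPartition (n : ℕ) (f : Fin n → ℕ) : Prop :=
  Antitone f ∧ ∀ i, f i ≤ n

/-- `conjAt n f i = λ'_i = #{j : λ_j ≥ i}` (for `i ≥ 1`), computed inside the box. -/
def conjAt (n : ℕ) (f : Fin n → ℕ) (i : ℕ) : ℕ :=
  (Finset.univ.filter fun j : Fin n => i ≤ f j).card

/-- The degree of symmetry of the (unpadded) partition encoded by `f`:
`ds(λ) = #{i ∈ {1,…,ℓ} : λ_i = λ'_i}`, where `ℓ` is the number of (nonzero) parts. -/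
def dsPart (n : ℕ) (f : Fin n → ℕ) : ℕ :=
  (Finset.univ.filter fun i : Fin n => 1 ≤ f i ∧ f i = conjAt n f (i.val + 1)).card

/-- `p n k`: the number of partitions `λ` with `max(λ_1, λ'_1) = n` and `ds(λ) = k`.
Such a partition fits in the `n × n` square; `λ_1 = Finset.univ.sup f` and
`λ'_1 = conjAt n f 1` is the number of parts. -/
noncomputable def p (n k : ℕ) : ℕ :=
  {f : Fin n → ℕ | IsBoxPartition n f ∧
    max (Finset.univ.sup f) (conjAt n f 1) = n ∧ dsPart n f = k}.ncard

/-- `g n k`: the number of grand Dyck paths of semilength `n` with degree of symmetry `k`. -/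
noncomputable def g (n k : ℕ) : ℕ :=
  {w : List Bool | IsGrandDyck n w ∧ dsGD n w = k}.ncard

namespace DSAux

open Finset

/-! ### List basics -/

lemma count_tf (l : List Bool) : l.count true + l.count false = l.length := by
  induction l with
  | nil => simp
  | cons a t ih => cases a <;> simp [List.count_cons] <;> omega

/-- prefix count of `b` as a card of a filter over `range j`. -/
lemma count_take_eq (w : List Bool) (b : Bool) (j : ℕ) :
    ((w.take j).count b) = ((Finset.range j).filter fun t => w.getD t (!b) = b).card := by
  induction j with
  | zero => simp
  | succ j ih =>
    rw [List.take_succ, List.count_append, ih, Finset.range_add_one, Finset.filter_insert]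
    by_cases hj : j < w.length
    · have h2 : w[j]? = some w[j] := List.getElem?_eq_getElem hj
      have hd : w.getD j (!b) = w[j] := by rw [List.getD_eq_getElem?_getD, h2]; rfl
      rw [h2]
      by_cases hb : w[j] = b
      · rw [if_pos (by rw [hd, hb]), Finset.card_insert_of_notMem (by simp)]
        simp [List.count_cons, hb]
      · rw [if_neg (by rw [hd]; exact hb)]
        simp [List.count_cons, hb]
    · have h9 : w[j]? = none := by rw [List.getElem?_eq_none_iff]; omega
      have hd : w.getD j (!b) = (!b) := by rw [List.getD_eq_getElem?_getD, h9]; rfl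
      rw [h9, if_neg (by rw [hd]; simp)]
      simp

lemma tc_mono (w : List Bool) {a b : ℕ} (hab : a ≤ b) :
    (w.take a).count true ≤ (w.take b).count true := by
  have h : w.take a = (w.take b).take a := by rw [List.take_take, min_eq_left hab]
  rw [h]
  exact List.Sublist.count_le _ (List.take_sublist _ _)

lemma tc_succ_true (w : List Bool) (t : ℕ) (h : w.getD t false = true) :
    (w.take (t+1)).count true = (w.take t).count true + 1 := by
  have ht : t < w.length := by
    by_contra hc
    rw [List.getD_eq_getElem?_getD, List.getElem?_eq_none_iff.mpr (by omega)] at h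
    simp at h
  have h2 : w[t]? = some w[t] := List.getElem?_eq_getElem ht
  rw [List.getD_eq_getElem?_getD, h2] at h
  simp at h
  rw [List.take_succ, h2, List.count_append]
  simp [h]

lemma tc_succ_le (w : List Bool) (t : ℕ) :
    (w.take (t+1)).count true ≤ (w.take t).count true + 1 := by
  rw [List.take_succ, List.count_append]
  have h : (w[t]?.toList).count true ≤ 1 := by
    cases h : w[t]? with
    | none => simp
    | some a => cases a <;> simp [List.count_cons]
  omega

lemma tc_le_len (w : List Bool) (j : ℕ) : (w.take j).count true ≤ j := by
  calc (w.take j).count true ≤ (w.take j).length := List.count_le_length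
  _ ≤ j := by simp

lemma tc_le_total (w : List Bool) (j : ℕ) : (w.take j).count true ≤ w.count true :=
  List.Sublist.count_le _ (List.take_sublist _ _)

/-! ### down-closed filters on `Icc 1 n` -/

lemma downclosed_card (n : ℕ) (q : ℕ → Prop) [DecidablePred q]
    (hdc : ∀ i j, 1 ≤ i → i ≤ j → j ≤ n → q j → q i) (i : ℕ) (hi1 : 1 ≤ i) (hin : i ≤ n) :
    (i ≤ ((Finset.Icc 1 n).filter q).card ↔ q i) := by
  constructor
  · intro hc
    by_contra hq
    have hsub : (Finset.Icc 1 n).filter q ⊆ Finset.Icc 1 (i-1) := by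
      intro j hj
      simp only [Finset.mem_filter, Finset.mem_Icc] at hj ⊢
      refine ⟨hj.1.1, ?_⟩
      by_contra hji
      exact hq (hdc i j hi1 (by omega) hj.1.2 hj.2)
    have := Finset.card_le_card hsub
    rw [Nat.card_Icc] at this
    omega
  · intro hq
    have hsub : Finset.Icc 1 i ⊆ (Finset.Icc 1 n).filter q := by
      intro j hj
      simp only [Finset.mem_Icc] at hj
      simp only [Finset.mem_filter, Finset.mem_Icc]
      exact ⟨⟨hj.1, by omega⟩, hdc j i hj.1 hj.2 hin hq⟩
    have := Finset.card_le_card hsub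
    rw [Nat.card_Icc] at this
    omega

/-- transfer a card over `Fin n` to a card over `Icc 1 n`. -/
lemma card_fin_eq_card_Icc (n : ℕ) (q : Fin n → Prop) [DecidablePred q]
    (q' : ℕ → Prop) [DecidablePred q'] (h : ∀ r : Fin n, q r ↔ q' (r.val + 1)) :
    (Finset.univ.filter q).card = ((Finset.Icc 1 n).filter q').card := by
  apply Finset.card_bij (fun r _ => r.val + 1)
  · intro r hr
    simp only [Finset.mem_filter, Finset.mem_univ, true_and] at hr
    simp only [Finset.mem_filter, Finset.mem_Icc]
    exact ⟨⟨by omega, by omega⟩, (h r).mp hr⟩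
  · intro a ha b hb hab
    simpa [Fin.ext_iff] using hab
  · intro i hi
    simp only [Finset.mem_filter, Finset.mem_Icc] at hi
    refine ⟨⟨i - 1, by omega⟩, ?_, by simp; omega⟩
    simp only [Finset.mem_filter, Finset.mem_univ, true_and]
    have h2 : (⟨i - 1, by omega⟩ : Fin n).val + 1 = i := by simp; omega
    rw [h, h2]
    exact hi.2

/-! ### partition combinatorics -/

/-- zero-padded 1-indexed part function -/
def lam (n : ℕ) (f : Fin n → ℕ) (i : ℕ) : ℕ :=
  if h : 1 ≤ i ∧ i ≤ n then f ⟨i - 1, by omega⟩ else 0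

def A (n : ℕ) (f : Fin n → ℕ) (t : ℕ) : ℕ :=
  ((Finset.Icc 1 n).filter fun i => i + t ≤ lam n f i).card

def B (n : ℕ) (f : Fin n → ℕ) (t : ℕ) : ℕ :=
  ((Finset.Icc 1 n).filter fun i => i + t ≤ conjAt n f i).card

def bb (n : ℕ) (f : Fin n → ℕ) (s : ℕ) : ℕ :=
  ((Finset.Icc 1 n).filter fun i => i ≤ lam n f i + s).card

def M (n : ℕ) (f : Fin n → ℕ) : ℕ := max (Finset.univ.sup f) (conjAt n f 1)

variable {n : ℕ} {f : Fin n → ℕ}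

lemma lam_eq (r : Fin n) : lam n f (r.val + 1) = f r := by
  have h : 1 ≤ r.val + 1 ∧ r.val + 1 ≤ n := ⟨by omega, by omega⟩
  simp only [lam, dif_pos h]
  congr 1

lemma lam_le (hfn : ∀ i, f i ≤ n) (i : ℕ) : lam n f i ≤ n := by
  unfold lam; split
  · exact hfn _
  · omega

lemma lam_anti (hf : Antitone f) {i j : ℕ} (h1 : 1 ≤ i) (hij : i ≤ j) :
    lam n f j ≤ lam n f i := by
  unfold lam
  split
  · next hj =>
    rw [dif_pos ⟨h1, by omega⟩]
    exact hf (by simp [Fin.le_def]; omega)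
  · simp

lemma conjAt_le : conjAt n f j ≤ n := by
  calc conjAt n f j ≤ (Finset.univ : Finset (Fin n)).card := Finset.card_le_card (Finset.filter_subset _ _)
  _ = n := by simp

lemma conjAt_anti {i j : ℕ} (hij : i ≤ j) : conjAt n f j ≤ conjAt n f i := by
  apply Finset.card_le_card
  intro r hr
  simp only [Finset.mem_filter, Finset.mem_univ, true_and] at hr ⊢
  omega

lemma conjAt_Icc : conjAt n f j = ((Finset.Icc 1 n).filter fun i => j ≤ lam n f i).card := by
  apply card_fin_eq_card_Icc
  intro r
  rw [lam_eq]

lemma conj_iff (hf : Antitone f) {j m : ℕ} (hj : 1 ≤ j) (hm : 1 ≤ m) :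
    m ≤ conjAt n f j ↔ j ≤ lam n f m := by
  by_cases hmn : m ≤ n
  · rw [conjAt_Icc]
    exact downclosed_card n _ (fun a b h1 hab hbn hq => le_trans hq (lam_anti hf h1 hab)) m hm hmn
  · constructor
    · intro h; exact absurd (le_trans h conjAt_le) (by omega)
    · intro h
      exfalso
      have : lam n f m = 0 := by unfold lam; rw [dif_neg (by omega)]
      omega

lemma A_le : A n f t ≤ n := by
  calc A n f t ≤ (Finset.Icc 1 n).card := Finset.card_le_card (Finset.filter_subset _ _)
  _ = n := by simp

lemma B_le : B n f t ≤ n := by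
  calc B n f t ≤ (Finset.Icc 1 n).card := Finset.card_le_card (Finset.filter_subset _ _)
  _ = n := by simp

lemma A_isl (hf : Antitone f) {i t : ℕ} (hi : 1 ≤ i) :
    i ≤ A n f t ↔ i + t ≤ lam n f i := by
  by_cases hin : i ≤ n
  · exact downclosed_card n _
      (fun a b h1 hab hbn hq => le_trans (by omega) (le_trans hq (lam_anti hf h1 hab))) i hi hin
  · constructor
    · intro h; exact absurd (le_trans h A_le) (by omega)
    · intro h
      exfalso
      have : lam n f i = 0 := by unfold lam; rw [dif_neg (by omega)]
      omega

lemma B_isl {i t : ℕ} (hi : 1 ≤ i) :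
    i ≤ B n f t ↔ i + t ≤ conjAt n f i := by
  by_cases hin : i ≤ n
  · exact downclosed_card n _
      (fun a b h1 hab hbn hq => le_trans (by omega) (le_trans hq (conjAt_anti hab))) i hi hin
  · constructor
    · intro h; exact absurd (le_trans h B_le) (by omega)
    · intro h
      exfalso
      have := @conjAt_le n f i
      omega

lemma KI (hf : Antitone f) {s : ℕ} (hs : s ≤ n) : bb n f s = s + B n f s := by
  have hsplit : ((Finset.Icc 1 n).filter fun i => i ≤ lam n f i + s)
      = (Finset.Icc 1 s) ∪ ((Finset.Icc 1 n).filter fun i => s + 1 ≤ i ∧ i ≤ lam n f i + s) := by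
    ext i
    simp only [Finset.mem_filter, Finset.mem_Icc, Finset.mem_union]
    constructor
    · intro h
      by_cases his : i ≤ s
      · exact Or.inl ⟨h.1.1, his⟩
      · exact Or.inr ⟨h.1, by omega, h.2⟩
    · rintro (h | h)
      · exact ⟨⟨h.1, by omega⟩, by omega⟩
      · exact ⟨h.1, h.2.2⟩
  have hdisj : Disjoint (Finset.Icc 1 s)
      ((Finset.Icc 1 n).filter fun i => s + 1 ≤ i ∧ i ≤ lam n f i + s) := by
    rw [Finset.disjoint_left]
    intro a ha hb
    simp only [Finset.mem_Icc] at ha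
    simp only [Finset.mem_filter] at hb
    omega
  have hcard2 : ((Finset.Icc 1 n).filter fun i => s + 1 ≤ i ∧ i ≤ lam n f i + s).card
      = B n f s := by
    apply Finset.card_bij (fun i _ => i - s)
    · intro i hi
      simp only [Finset.mem_filter, Finset.mem_Icc] at hi ⊢
      have h1 : 1 ≤ i - s := by omega
      have h2 : i - s + s = i := by omega
      refine ⟨⟨h1, by omega⟩, ?_⟩
      rw [h2]
      rw [conj_iff hf h1 (by omega : 1 ≤ i)]
      omega
    · intro a ha b hb hab
      simp only [Finset.mem_filter] at ha hb
      omega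
    · intro j hj
      simp only [Finset.mem_filter, Finset.mem_Icc] at hj
      have hcle : conjAt n f j ≤ n := conjAt_le
      refine ⟨j + s, ?_, by omega⟩
      simp only [Finset.mem_filter, Finset.mem_Icc]
      have := (conj_iff hf (by omega : 1 ≤ j) (by omega : 1 ≤ j + s)).mp (by omega)
      exact ⟨⟨by omega, by omega⟩, by omega, by omega⟩
  unfold bb
  rw [hsplit, Finset.card_union_of_disjoint hdisj, hcard2, Nat.card_Icc]
  omega

lemma sup_le_M : Finset.univ.sup f ≤ M n f := le_max_left _ _

lemma f_le_M (r : Fin n) : f r ≤ M n f :=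
  le_trans (Finset.le_sup (Finset.mem_univ r)) sup_le_M

lemma lam_le_M {i : ℕ} : lam n f i ≤ M n f := by
  unfold lam; split
  · exact f_le_M _
  · omega

lemma conjAt_le_M {j : ℕ} (hj : 1 ≤ j) : conjAt n f j ≤ M n f :=
  le_trans (conjAt_anti hj) (le_max_right _ _)

lemma M_le (hfn : ∀ i, f i ≤ n) : M n f ≤ n := by
  apply max_le _ conjAt_le
  exact Finset.sup_le fun r _ => hfn r

lemma A_eq_zero (hf : Antitone f) {t : ℕ} (ht : M n f ≤ t) : A n f t = 0 := by
  by_contra h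
  have h1 : 1 ≤ A n f t := by omega
  have := (A_isl hf (le_refl 1)).mp h1
  have := @lam_le_M n f 1
  omega

lemma B_eq_zero {t : ℕ} (ht : M n f ≤ t) : B n f t = 0 := by
  by_contra h
  have h1 : 1 ≤ B n f t := by omega
  have := (B_isl (le_refl 1)).mp h1
  have := @conjAt_le_M n f 1 (le_refl 1)
  omega

lemma dsPart_Icc : dsPart n f
    = ((Finset.Icc 1 n).filter fun i => 1 ≤ lam n f i ∧ lam n f i = conjAt n f i).card := by
  apply card_fin_eq_card_Icc
  intro r
  rw [lam_eq]


/-! ### the path of a partition -/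

def pos (n : ℕ) (f : Fin n → ℕ) (r : Fin n) : ℕ := f r + (n - 1 - r.val)

def Phi (n : ℕ) (f : Fin n → ℕ) : List Bool :=
  List.ofFn fun t : Fin (2 * n) => decide (∃ r : Fin n, pos n f r = t.val)

def U (n : ℕ) (f : Fin n → ℕ) (j : ℕ) : ℕ :=
  (Finset.univ.filter fun r : Fin n => pos n f r < j).card

lemma pos_strictAnti (hf : Antitone f) : StrictAnti (pos n f) := by
  intro r r' h
  have h1 := hf (le_of_lt h)
  have h2 : r.val < r'.val := h
  have h3 : r'.val < n := r'.isLt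
  unfold pos
  omega

lemma pos_injective (hf : Antitone f) : Function.Injective (pos n f) :=
  (pos_strictAnti hf).injective

lemma pos_lt (hfn : ∀ i, f i ≤ n) (r : Fin n) : pos n f r < 2 * n := by
  have h1 := hfn r
  have h2 : r.val < n := r.isLt
  unfold pos
  omega

lemma length_Phi : (Phi n f).length = 2 * n := by simp [Phi]

lemma getD_Phi {t : ℕ} (ht : t < 2 * n) :
    (Phi n f).getD t false = decide (∃ r : Fin n, pos n f r = t) := by
  have hl : t < (Phi n f).length := by rw [length_Phi]; exact ht
  rw [List.getD_eq_getElem?_getD, List.getElem?_eq_getElem hl]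
  simp only [Option.getD_some]
  unfold Phi
  exact List.getElem_ofFn _

lemma count_take_Phi (hf : Antitone f) {j : ℕ} (hj : j ≤ 2 * n) :
    ((Phi n f).take j).count true = U n f j := by
  rw [count_take_eq]
  symm
  apply Finset.card_bij (fun r _ => pos n f r)
  · intro r hr
    simp only [Finset.mem_filter, Finset.mem_univ, true_and] at hr
    simp only [Finset.mem_filter, Finset.mem_range]
    refine ⟨hr, ?_⟩
    show (Phi n f).getD (pos n f r) (!true) = true
    rw [show (!true) = false from rfl, getD_Phi (by omega)]
    simp only [decide_eq_true_eq]
    exact ⟨r, rfl⟩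
  · intro a ha b hb hab
    exact pos_injective hf hab
  · intro t htm
    simp only [Finset.mem_filter, Finset.mem_range] at htm
    obtain ⟨ht1, ht2⟩ := htm
    rw [show (!true) = false from rfl, getD_Phi (by omega)] at ht2
    rw [decide_eq_true_iff] at ht2
    obtain ⟨r, hr⟩ := ht2
    exact ⟨r, by simp only [Finset.mem_filter, Finset.mem_univ, true_and]; omega, hr⟩

lemma Phi_GD (hf : Antitone f) (hfn : ∀ i, f i ≤ n) : IsGrandDyck n (Phi n f) := by
  refine ⟨length_Phi, ?_⟩
  have h1 : (Phi n f) = (Phi n f).take (2 * n) := by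
    rw [← length_Phi]
    exact List.take_length.symm
  conv_lhs => rw [h1]
  rw [count_take_Phi hf (le_refl _)]
  unfold U
  have : (Finset.univ.filter fun r : Fin n => pos n f r < 2 * n) = Finset.univ := by
    apply Finset.filter_true_of_mem
    intro r _
    exact pos_lt hfn r
  rw [this]
  simp

lemma ht_Phi (hf : Antitone f) {j : ℕ} (hj : j ≤ 2 * n) :
    ht (Phi n f) j = 2 * (U n f j : ℤ) - j := by
  have h1 := count_take_Phi hf hj
  have h2 := count_tf ((Phi n f).take j)
  have h3 : ((Phi n f).take j).length = j := by
    rw [List.length_take, length_Phi]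
    omega
  unfold ht
  omega

lemma U_split {j j' : ℕ} (h : j ≤ j') :
    U n f j' = U n f j + (Finset.univ.filter fun r : Fin n => j ≤ pos n f r ∧ pos n f r < j').card := by
  unfold U
  rw [← Finset.card_union_of_disjoint]
  · congr 1
    ext r
    simp only [Finset.mem_union, Finset.mem_filter, Finset.mem_univ, true_and]
    omega
  · rw [Finset.disjoint_left]
    intro a ha hb
    simp only [Finset.mem_filter, Finset.mem_univ, true_and] at ha hb
    omega

lemma card_filter_and_not {α : Type*} [DecidableEq α] (s : Finset α) (P Q : α → Prop)
    [DecidablePred P] [DecidablePred Q] (h : ∀ a ∈ s, Q a → P a) :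
    (s.filter fun a => P a ∧ ¬ Q a).card = (s.filter P).card - (s.filter Q).card := by
  have hsplit : s.filter P = (s.filter fun a => P a ∧ ¬ Q a) ∪ s.filter Q := by
    ext a
    simp only [Finset.mem_filter, Finset.mem_union]
    constructor
    · intro ha
      by_cases hq : Q a
      · exact Or.inr ⟨ha.1, hq⟩
      · exact Or.inl ⟨ha.1, ha.2, hq⟩
    · rintro (ha | ha)
      · exact ⟨ha.1, ha.2.1⟩
      · exact ⟨ha.1, h a ha.1 ha.2⟩
  have hdisj : Disjoint (s.filter fun a => P a ∧ ¬ Q a) (s.filter Q) := by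
    rw [Finset.disjoint_left]
    intro a ha hb
    simp only [Finset.mem_filter] at ha hb
    exact ha.2.2 hb.2
  rw [hsplit, Finset.card_union_of_disjoint hdisj]
  omega

lemma mid_card (hf : Antitone f) {s : ℕ} (hsn : s ≤ n)
    {j j' : ℕ} (hcond : ∀ r : Fin n, (j ≤ pos n f r ∧ pos n f r < j')
      ↔ (r.val + 1 ≤ f r + s ∧ ¬ (r.val + 1 + s ≤ f r))) :
    (Finset.univ.filter fun r : Fin n => j ≤ pos n f r ∧ pos n f r < j').card
      = s + B n f s - A n f s := by
  have h1 : (Finset.univ.filter fun r : Fin n => j ≤ pos n f r ∧ pos n f r < j').card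
      = ((Finset.Icc 1 n).filter fun i => i ≤ lam n f i + s ∧ ¬ (i + s ≤ lam n f i)).card := by
    apply card_fin_eq_card_Icc
    intro r
    rw [hcond r, lam_eq]
  rw [h1, card_filter_and_not _ _ _ (fun a _ ha => by omega)]
  have h2 : ((Finset.Icc 1 n).filter fun i => i ≤ lam n f i + s).card = bb n f s := rfl
  have h3 : ((Finset.Icc 1 n).filter fun i => i + s ≤ lam n f i).card = A n f s := rfl
  rw [h2, h3, KI hf hsn]

lemma cond_iff (hf : Antitone f) (hfn : ∀ i, f i ≤ n) {i s : ℕ}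
    (hi1 : 1 ≤ i) (hin : i ≤ n) (hs : i + s = n + 1) :
    (ht (Phi n f) (i - 1) = ht (Phi n f) (2 * n + 1 - i)
      ∧ ht (Phi n f) i = ht (Phi n f) (2 * n - i))
    ↔ (A n f s = B n f s ∧ A n f (s - 1) = B n f (s - 1)) := by
  have hAb : A n f s ≤ bb n f s := by
    apply Finset.card_le_card
    intro a ha
    simp only [Finset.mem_filter] at ha ⊢
    exact ⟨ha.1, by omega⟩
  have hAb' : A n f (s-1) ≤ bb n f (s-1) := by
    apply Finset.card_le_card
    intro a ha
    simp only [Finset.mem_filter] at ha ⊢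
    exact ⟨ha.1, by omega⟩
  have hKI := KI hf (show s ≤ n by omega)
  have hKI' := KI hf (show s - 1 ≤ n by omega)
  have e1 := ht_Phi (f := f) hf (show i - 1 ≤ 2*n by omega)
  have e2 := ht_Phi (f := f) hf (show 2*n+1-i ≤ 2*n by omega)
  have e3 := ht_Phi (f := f) hf (show i ≤ 2*n by omega)
  have e4 := ht_Phi (f := f) hf (show 2*n-i ≤ 2*n by omega)
  have hu1 := U_split (n := n) (f := f) (show i - 1 ≤ 2*n+1-i by omega)
  have hu2 := U_split (n := n) (f := f) (show i ≤ 2*n-i by omega)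
  have hm1 : (Finset.univ.filter fun r : Fin n => i - 1 ≤ pos n f r ∧ pos n f r < 2*n+1-i).card
      = s + B n f s - A n f s := by
    apply mid_card hf (by omega)
    intro r
    have h2 : r.val < n := r.isLt
    unfold pos
    omega
  have hm2 : (Finset.univ.filter fun r : Fin n => i ≤ pos n f r ∧ pos n f r < 2*n-i).card
      = (s-1) + B n f (s-1) - A n f (s-1) := by
    apply mid_card hf (by omega)
    intro r
    have h2 : r.val < n := r.isLt
    unfold pos
    omega
  rw [e1, e2, e3, e4]
  rw [hm1] at hu1
  rw [hm2] at hu2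
  have hB := @B_le n f s
  have hB' := @B_le n f (s-1)
  have hA := @A_le n f s
  have hA' := @A_le n f (s-1)
  constructor
  · rintro ⟨h1, h2⟩
    constructor <;> omega
  · rintro ⟨h1, h2⟩
    constructor <;> omega


/-! ### the degree-of-symmetry formula -/

lemma A_anti {t t' : ℕ} (h : t ≤ t') : A n f t' ≤ A n f t := by
  apply Finset.card_le_card
  intro a ha
  simp only [Finset.mem_filter] at ha ⊢
  exact ⟨ha.1, by omega⟩

lemma A_step (hf : Antitone f) {s : ℕ} (hs : 1 ≤ s) : A n f (s - 1) ≤ A n f s + 1 := by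
  set a := A n f (s - 1) with ha
  rcases Nat.lt_or_ge a 2 with h | h
  · omega
  · have h1 : a + (s - 1) ≤ lam n f a := (A_isl hf (by omega)).mp (le_refl _)
    have h2 : lam n f (a - 1) ≥ lam n f a := lam_anti hf (by omega) (by omega)
    have h3 : (a - 1) + s ≤ lam n f (a - 1) := by omega
    have h4 := (A_isl hf (show 1 ≤ a - 1 by omega)).mpr h3
    omega

lemma sup_eq_lam1 (hf : Antitone f) (hn : 1 ≤ n) : Finset.univ.sup f = lam n f 1 := by
  have h0 : lam n f 1 = f ⟨0, by omega⟩ := by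
    have := lam_eq (n := n) (f := f) ⟨0, by omega⟩
    simpa using this
  rw [h0]
  apply le_antisymm
  · exact Finset.sup_le fun r _ => hf (by simp [Fin.le_def])
  · exact Finset.le_sup (Finset.mem_univ _)

/-- the inverse map from good indices to diagonal indices -/
def psi (n : ℕ) (f : Fin n → ℕ) (s : ℕ) : ℕ :=
  if A n f (s - 1) = A n f s + 1 then A n f (s - 1) else s + A n f s

/-- the forward map from diagonal indices to good indices -/
def phi (n : ℕ) (f : Fin n → ℕ) (i : ℕ) : ℕ :=
  if i ≤ lam n f i then lam n f i + 1 - i else i - lam n f i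

lemma goodM_card (hf : Antitone f) (hfn : ∀ i, f i ≤ n) :
    ((Finset.Icc 1 (M n f)).filter fun s =>
        A n f s = B n f s ∧ A n f (s-1) = B n f (s-1)).card = dsPart n f := by
  -- facts used in the "else" branch of ψ: A (s-1) = A s ≥ 1 and lam (s + A s) = A s
  have keyPsiElse : ∀ s : ℕ, 1 ≤ s → s ≤ M n f →
      A n f s = B n f s → A n f (s-1) = B n f (s-1) → ¬ (A n f (s-1) = A n f s + 1) →
      (1 ≤ A n f s ∧ A n f (s-1) = A n f s ∧ s + A n f s ≤ n ∧
        lam n f (s + A n f s) = A n f s ∧ conjAt n f (s + A n f s) = A n f s) := by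
    intro s hs1 hsM hAB hAB' h1
    have hstep := A_step hf hs1
    have hanti := A_anti (n := n) (f := f) (show s - 1 ≤ s by omega)
    have h2 : A n f (s - 1) = A n f s := by omega
    have hv1 : 1 ≤ A n f s := by
      by_contra hv0
      have hn1 : 1 ≤ n := by
        have := M_le hfn
        omega
      have hL : ¬ (1 ≤ A n f (s - 1)) := by omega
      rw [A_isl hf (le_refl 1)] at hL
      have hC : ¬ (1 ≤ B n f (s - 1)) := by omega
      rw [B_isl (le_refl 1)] at hC
      have hsup := sup_eq_lam1 hf hn1
      have hMle : M n f ≤ max (lam n f 1) (conjAt n f 1) := by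
        unfold M
        rw [hsup]
      simp only [le_max_iff] at hMle
      omega
    have hcv : A n f s + s ≤ conjAt n f (A n f s) := (B_isl hv1).mp (by omega)
    have hcn := @conjAt_le n f (A n f s)
    have hin : s + A n f s ≤ n := by omega
    have hge : A n f s ≤ lam n f (s + A n f s) := by
      rw [← conj_iff hf hv1 (by omega : 1 ≤ s + A n f s)]
      omega
    have hle : ¬ (A n f s + 1 ≤ lam n f (s + A n f s)) := by
      intro hc
      have h5 : s + A n f s ≤ conjAt n f (A n f s + 1) :=
        (conj_iff hf (by omega : 1 ≤ A n f s + 1) (by omega : 1 ≤ s + A n f s)).mpr hc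
      have h6 : (A n f s + 1) + (s - 1) ≤ conjAt n f (A n f s + 1) := by omega
      have := (B_isl (t := s - 1) (show 1 ≤ A n f s + 1 by omega)).mpr h6
      omega
    have hlv : A n f s + s ≤ lam n f (A n f s) := (A_isl hf hv1).mp (le_refl _)
    have hge' : A n f s ≤ conjAt n f (s + A n f s) := by
      rw [conj_iff hf (by omega : 1 ≤ s + A n f s) hv1]
      omega
    have hle' : ¬ (A n f s + 1 ≤ conjAt n f (s + A n f s)) := by
      intro hc
      have h5 : s + A n f s ≤ lam n f (A n f s + 1) :=
        (conj_iff hf (by omega : 1 ≤ s + A n f s) (by omega : 1 ≤ A n f s + 1)).mp hc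
      have h6 : (A n f s + 1) + (s - 1) ≤ lam n f (A n f s + 1) := by omega
      have := (A_isl hf (show 1 ≤ A n f s + 1 by omega)).mpr h6
      omega
    exact ⟨hv1, h2, hin, by omega, by omega⟩
  -- facts used in the "then" branch of ψ: lam and conjAt at A (s-1) equal s + A(s-1) - 1
  have keyPsiThen : ∀ s : ℕ, 1 ≤ s →
      A n f s = B n f s → A n f (s-1) = B n f (s-1) → A n f (s-1) = A n f s + 1 →
      (1 ≤ A n f (s-1) ∧ A n f (s-1) ≤ n ∧
        lam n f (A n f (s-1)) = A n f (s-1) + s - 1 ∧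
        conjAt n f (A n f (s-1)) = A n f (s-1) + s - 1) := by
    intro s hs1 hAB hAB' h1
    have hi1 : 1 ≤ A n f (s-1) := by omega
    have hl1 : A n f (s-1) + (s - 1) ≤ lam n f (A n f (s-1)) := (A_isl hf hi1).mp (le_refl _)
    have hl2 : ¬ (A n f (s-1) + s ≤ lam n f (A n f (s-1))) := by
      intro hc
      have := (A_isl hf hi1).mpr hc
      omega
    have hc1 : A n f (s-1) + (s - 1) ≤ conjAt n f (A n f (s-1)) := (B_isl hi1).mp (by omega)
    have hc2 : ¬ (A n f (s-1) + s ≤ conjAt n f (A n f (s-1))) := by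
      intro hc
      have := (B_isl (t := s) hi1).mpr hc
      omega
    exact ⟨hi1, A_le, by omega, by omega⟩
  -- facts for φ, case lam i ≥ i
  have keyPhiGe : ∀ i : ℕ, 1 ≤ i → i ≤ n → 1 ≤ lam n f i → lam n f i = conjAt n f i →
      i ≤ lam n f i →
      (A n f (lam n f i + 1 - i - 1) = i ∧ A n f (lam n f i + 1 - i) = i - 1 ∧
        B n f (lam n f i + 1 - i - 1) = i ∧ B n f (lam n f i + 1 - i) = i - 1) := by
    intro i hi1 hin hv1 hvc hvi
    refine ⟨?_, ?_, ?_, ?_⟩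
    · apply le_antisymm
      · by_contra hc
        have h5 := (A_isl hf (show 1 ≤ i + 1 by omega)).mp
          (show i + 1 ≤ A n f (lam n f i + 1 - i - 1) by omega)
        have h6 : lam n f (i + 1) ≤ lam n f i := lam_anti hf hi1 (by omega)
        omega
      · exact (A_isl hf hi1).mpr (by omega)
    · apply le_antisymm
      · by_contra hc
        have h5 := (A_isl hf hi1).mp (show i ≤ A n f (lam n f i + 1 - i) by omega)
        omega
      · rcases Nat.lt_or_ge i 2 with h | h
        · omega
        · have h6 : lam n f i ≤ lam n f (i - 1) := lam_anti hf (by omega) (by omega)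
          exact (A_isl hf (show 1 ≤ i - 1 by omega)).mpr (by omega)
    · apply le_antisymm
      · by_contra hc
        have h5 := (B_isl (show 1 ≤ i + 1 by omega)).mp
          (show i + 1 ≤ B n f (lam n f i + 1 - i - 1) by omega)
        have h6 : conjAt n f (i + 1) ≤ conjAt n f i := conjAt_anti (by omega)
        omega
      · exact (B_isl hi1).mpr (by omega)
    · apply le_antisymm
      · by_contra hc
        have h5 := (B_isl hi1).mp (show i ≤ B n f (lam n f i + 1 - i) by omega)
        omega
      · rcases Nat.lt_or_ge i 2 with h | h
        · omega
        · have h6 : conjAt n f i ≤ conjAt n f (i - 1) := conjAt_anti (by omega)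
          exact (B_isl (show 1 ≤ i - 1 by omega)).mpr (by omega)
  -- facts for φ, case lam i < i
  have keyPhiLt : ∀ i : ℕ, 1 ≤ i → i ≤ n → 1 ≤ lam n f i → lam n f i = conjAt n f i →
      lam n f i < i →
      (A n f (i - lam n f i - 1) = lam n f i ∧ A n f (i - lam n f i) = lam n f i ∧
        B n f (i - lam n f i - 1) = lam n f i ∧ B n f (i - lam n f i) = lam n f i ∧
        i ≤ conjAt n f (lam n f i)) := by
    intro i hi1 hin hv1 hvc hvi
    have hG0 : i ≤ conjAt n f (lam n f i) := (conj_iff hf hv1 hi1).mpr (le_refl _)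
    have hlvi : i ≤ lam n f (lam n f i) := (conj_iff hf hi1 hv1).mp (by omega)
    refine ⟨?_, ?_, ?_, ?_, hG0⟩
    · apply le_antisymm
      · by_contra hc
        have h5 := (A_isl hf (show 1 ≤ lam n f i + 1 by omega)).mp
          (show lam n f i + 1 ≤ A n f (i - lam n f i - 1) by omega)
        have h6 : lam n f i + 1 ≤ conjAt n f i :=
          (conj_iff hf hi1 (by omega)).mpr (by omega)
        omega
      · exact (A_isl hf hv1).mpr (by omega)
    · apply le_antisymm
      · by_contra hc
        have h5 := (A_isl hf (show 1 ≤ lam n f i + 1 by omega)).mp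
          (show lam n f i + 1 ≤ A n f (i - lam n f i) by omega)
        have h6 : lam n f i + 1 ≤ conjAt n f (i + 1) :=
          (conj_iff hf (show 1 ≤ i + 1 by omega) (by omega)).mpr (by omega)
        have h7 : conjAt n f (i + 1) ≤ conjAt n f i := conjAt_anti (by omega)
        omega
      · exact (A_isl hf hv1).mpr (by omega)
    · apply le_antisymm
      · by_contra hc
        have h5 := (B_isl (show 1 ≤ lam n f i + 1 by omega)).mp
          (show lam n f i + 1 ≤ B n f (i - lam n f i - 1) by omega)
        have h6 : lam n f i + 1 ≤ lam n f i :=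
          (conj_iff hf (show 1 ≤ lam n f i + 1 by omega) hi1).mp (by omega)
        omega
      · exact (B_isl hv1).mpr (by omega)
    · apply le_antisymm
      · by_contra hc
        have h5 := (B_isl (show 1 ≤ lam n f i + 1 by omega)).mp
          (show lam n f i + 1 ≤ B n f (i - lam n f i) by omega)
        have h6 : lam n f i + 1 ≤ lam n f (i + 1) :=
          (conj_iff hf (show 1 ≤ lam n f i + 1 by omega) (show 1 ≤ i + 1 by omega)).mp (by omega)
        have h7 : lam n f (i + 1) ≤ lam n f i := lam_anti hf hi1 (by omega)
        omega
      · exact (B_isl hv1).mpr (by omega)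
  rw [dsPart_Icc]
  apply Finset.card_bij' (fun s _ => psi n f s) (fun i _ => phi n f i)
  -- ψ maps good into pgood
  · intro s hs
    simp only [Finset.mem_filter, Finset.mem_Icc] at hs
    obtain ⟨⟨hs1, hsM⟩, hAB, hAB'⟩ := hs
    by_cases h1 : A n f (s - 1) = A n f s + 1
    · obtain ⟨k1, k2, k3, k4⟩ := keyPsiThen s hs1 hAB hAB' h1
      simp only [psi, if_pos h1, Finset.mem_filter, Finset.mem_Icc]
      exact ⟨⟨k1, k2⟩, by omega, by omega⟩
    · obtain ⟨k1, k2, k3, k4, k5⟩ := keyPsiElse s hs1 hsM hAB hAB' h1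
      simp only [psi, if_neg h1, Finset.mem_filter, Finset.mem_Icc]
      exact ⟨⟨by omega, k3⟩, by omega, by omega⟩
  -- φ maps pgood into good
  · intro i hi
    simp only [Finset.mem_filter, Finset.mem_Icc] at hi
    obtain ⟨⟨hi1, hin⟩, hv1, hvc⟩ := hi
    by_cases hvi : i ≤ lam n f i
    · obtain ⟨k1, k2, k3, k4⟩ := keyPhiGe i hi1 hin hv1 hvc hvi
      have hsM : lam n f i + 1 - i ≤ M n f := le_trans (by omega) (lam_le_M (i := i))
      simp only [phi, if_pos hvi, Finset.mem_filter, Finset.mem_Icc]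
      exact ⟨⟨by omega, hsM⟩, by omega, by omega⟩
    · push_neg at hvi
      obtain ⟨k1, k2, k3, k4, k5⟩ := keyPhiLt i hi1 hin hv1 hvc hvi
      have hsM : i - lam n f i ≤ M n f := by
        have := conjAt_le_M (n := n) (f := f) (show 1 ≤ lam n f i by omega)
        omega
      simp only [phi, if_neg (by omega : ¬ i ≤ lam n f i), Finset.mem_filter, Finset.mem_Icc]
      exact ⟨⟨by omega, hsM⟩, by omega, by omega⟩
  -- φ ∘ ψ = id
  · intro s hs
    simp only [Finset.mem_filter, Finset.mem_Icc] at hs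
    obtain ⟨⟨hs1, hsM⟩, hAB, hAB'⟩ := hs
    by_cases h1 : A n f (s - 1) = A n f s + 1
    · obtain ⟨k1, k2, k3, k4⟩ := keyPsiThen s hs1 hAB hAB' h1
      have hpsi : psi n f s = A n f (s - 1) := by simp [psi, if_pos h1]
      rw [hpsi]
      unfold phi
      rw [k3, if_pos (by omega : A n f (s-1) ≤ A n f (s-1) + s - 1)]
      omega
    · obtain ⟨k1, k2, k3, k4, k5⟩ := keyPsiElse s hs1 hsM hAB hAB' h1
      have hpsi : psi n f s = s + A n f s := by simp [psi, if_neg h1]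
      rw [hpsi]
      unfold phi
      rw [k4, if_neg (by omega : ¬ (s + A n f s ≤ A n f s))]
      omega
  -- ψ ∘ φ = id
  · intro i hi
    simp only [Finset.mem_filter, Finset.mem_Icc] at hi
    obtain ⟨⟨hi1, hin⟩, hv1, hvc⟩ := hi
    by_cases hvi : i ≤ lam n f i
    · obtain ⟨k1, k2, k3, k4⟩ := keyPhiGe i hi1 hin hv1 hvc hvi
      have hphi : phi n f i = lam n f i + 1 - i := by simp [phi, if_pos hvi]
      rw [hphi]
      unfold psi
      rw [k1, k2, if_pos (by omega : i = i - 1 + 1)]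
    · push_neg at hvi
      obtain ⟨k1, k2, k3, k4, k5⟩ := keyPhiLt i hi1 hin hv1 hvc hvi
      have hphi : phi n f i = i - lam n f i := by
        simp only [phi, if_neg (by omega : ¬ i ≤ lam n f i)]
      rw [hphi]
      unfold psi
      rw [k1, k2, if_neg (by omega : ¬ (lam n f i = lam n f i + 1))]
      omega

lemma dsGD_Phi (hf : Antitone f) (hfn : ∀ i, f i ≤ n) :
    dsGD n (Phi n f) = dsPart n f + (n - M n f) := by
  have hM := M_le hfn
  unfold dsGD
  -- reindex i ↦ n + 1 - i
  have hre : ((Finset.Icc 1 n).filter fun i =>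
      ht (Phi n f) (i - 1) = ht (Phi n f) (2 * n + 1 - i)
        ∧ ht (Phi n f) i = ht (Phi n f) (2 * n - i)).card
      = ((Finset.Icc 1 n).filter fun s =>
          A n f s = B n f s ∧ A n f (s-1) = B n f (s-1)).card := by
    apply Finset.card_bij (fun i _ => n + 1 - i)
    · intro i hi
      simp only [Finset.mem_filter, Finset.mem_Icc] at hi ⊢
      obtain ⟨⟨hi1, hin⟩, hcond⟩ := hi
      refine ⟨⟨by omega, by omega⟩, ?_⟩
      exact (cond_iff hf hfn hi1 hin (by omega)).mp hcond
    · intro a ha b hb hab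
      simp only [Finset.mem_filter, Finset.mem_Icc] at ha hb
      omega
    · intro s hsm
      simp only [Finset.mem_filter, Finset.mem_Icc] at hsm
      obtain ⟨⟨hs1, hsn⟩, hgood⟩ := hsm
      refine ⟨n + 1 - s, ?_, by omega⟩
      simp only [Finset.mem_filter, Finset.mem_Icc]
      refine ⟨⟨by omega, by omega⟩, ?_⟩
      exact (cond_iff hf hfn (i := n + 1 - s) (s := s) (by omega) (by omega) (by omega)).mpr hgood
  rw [hre]
  have hsplit : Finset.Icc 1 n = Finset.Icc 1 (M n f) ∪ Finset.Icc (M n f + 1) n := by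
    ext a
    simp only [Finset.mem_Icc, Finset.mem_union]
    omega
  have hdisj : Disjoint ((Finset.Icc 1 (M n f)).filter fun s =>
      A n f s = B n f s ∧ A n f (s-1) = B n f (s-1))
      ((Finset.Icc (M n f + 1) n).filter fun s =>
        A n f s = B n f s ∧ A n f (s-1) = B n f (s-1)) := by
    rw [Finset.disjoint_left]
    intro a ha hb
    simp only [Finset.mem_filter, Finset.mem_Icc] at ha hb
    omega
  rw [hsplit, Finset.filter_union, Finset.card_union_of_disjoint hdisj]
  have htail : (Finset.Icc (M n f + 1) n).filter (fun s =>
      A n f s = B n f s ∧ A n f (s-1) = B n f (s-1)) = Finset.Icc (M n f + 1) n := by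
    apply Finset.filter_true_of_mem
    intro s hsm
    simp only [Finset.mem_Icc] at hsm
    have h1 := A_eq_zero (n := n) (f := f) hf (show M n f ≤ s by omega)
    have h2 := B_eq_zero (n := n) (f := f) (show M n f ≤ s by omega)
    have h3 := A_eq_zero (n := n) (f := f) hf (show M n f ≤ s - 1 by omega)
    have h4 := B_eq_zero (n := n) (f := f) (show M n f ≤ s - 1 by omega)
    omega
  rw [htail, goodM_card hf hfn, Nat.card_Icc]
  omega


/-! ### the inverse map -/

def Psi (n : ℕ) (w : List Bool) (r : Fin n) : ℕ :=
  ((Finset.range (2*n)).filter fun t =>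
    w.getD t true = false ∧ (w.take t).count true + r.val + 1 ≤ n).card

lemma getD_lt (w : List Bool) {t : ℕ} (h : t < w.length) (d : Bool) : w.getD t d = w[t] := by
  rw [List.getD_eq_getElem?_getD, List.getElem?_eq_getElem h]
  rfl

lemma tc_succ_false (w : List Bool) (t : ℕ) (h : ¬ w.getD t false = true) :
    (w.take (t+1)).count true = (w.take t).count true := by
  rcases Nat.lt_or_ge t w.length with hlt | hge
  · have h2 : w[t]? = some w[t] := List.getElem?_eq_getElem hlt
    rw [getD_lt w hlt] at h
    rw [List.take_succ, h2, List.count_append]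
    simp at h
    simp [h]
  · rw [List.take_succ, List.getElem?_eq_none_iff.mpr hge]
    simp

lemma exists_true_at (w : List Bool) {n : ℕ} (hw : w.length = 2*n) (hc : w.count true = n)
    {m : ℕ} (hm : m < n) :
    ∃ t0, t0 < 2*n ∧ w.getD t0 false = true ∧ (w.take t0).count true = m := by
  have hP : ∃ j, m + 1 ≤ (w.take j).count true := by
    refine ⟨2*n, ?_⟩
    rw [List.take_of_length_le (by omega)]
    omega
  have hspec := Nat.find_spec hP
  have hj0 : Nat.find hP ≠ 0 := by
    intro h0
    rw [h0] at hspec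
    simp at hspec
  have hmin : ¬ (m + 1 ≤ (w.take (Nat.find hP - 1)).count true) :=
    Nat.find_min hP (show Nat.find hP - 1 < Nat.find hP by omega)
  have hle := tc_succ_le w (Nat.find hP - 1)
  have hj1 : Nat.find hP - 1 + 1 = Nat.find hP := by omega
  rw [hj1] at hle
  have htrue : w.getD (Nat.find hP - 1) false = true := by
    by_contra hft
    have h9 := tc_succ_false w (Nat.find hP - 1) hft
    rw [hj1] at h9
    omega
  have hjlen : Nat.find hP - 1 < w.length := by
    by_contra hgl
    rw [List.getD_eq_getElem?_getD, List.getElem?_eq_none_iff.mpr (by omega)] at htrue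
    simp at htrue
  refine ⟨Nat.find hP - 1, by omega, htrue, by omega⟩

lemma Psi_spec {n : ℕ} (w : List Bool) (hw : w.length = 2*n) (r : Fin n) (t0 : ℕ)
    (ht0 : t0 < 2*n) (htrue : w.getD t0 false = true)
    (htc : (w.take t0).count true + r.val + 1 = n) :
    Psi n w r + (n - 1 - r.val) = t0 := by
  have hset : ((Finset.range (2*n)).filter fun t =>
      w.getD t true = false ∧ (w.take t).count true + r.val + 1 ≤ n)
      = (Finset.range t0).filter fun t => w.getD t true = false := by
    ext t
    simp only [Finset.mem_filter, Finset.mem_range]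
    constructor
    · rintro ⟨ht2n, hfalse, hle⟩
      refine ⟨?_, hfalse⟩
      rcases Nat.lt_trichotomy t t0 with h | h | h
      · exact h
      · exfalso
        subst h
        rw [getD_lt w (by omega) true] at hfalse
        rw [getD_lt w (by omega) false] at htrue
        rw [htrue] at hfalse
        exact Bool.noConfusion hfalse
      · exfalso
        have h1 := tc_succ_true w t0 htrue
        have h2 := tc_mono w (show t0 + 1 ≤ t by omega)
        omega
    · rintro ⟨htlt, hfalse⟩
      have h2 := tc_mono w (show t ≤ t0 by omega)
      exact ⟨by omega, hfalse, by omega⟩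
  have hcount : ((Finset.range t0).filter fun t => w.getD t true = false).card
      = (w.take t0).count false := by
    rw [count_take_eq w false t0]
    rfl
  have hlen : (w.take t0).length = t0 := by
    rw [List.length_take]
    omega
  have htf := count_tf (w.take t0)
  have htle := tc_le_len w t0
  unfold Psi
  rw [hset, hcount]
  omega

lemma Psi_box {n : ℕ} {w : List Bool} (hw : IsGrandDyck n w) : IsBoxPartition n (Psi n w) := by
  obtain ⟨hlen, hcnt⟩ := hw
  constructor
  · intro r r' hrr
    apply Finset.card_le_card
    intro t htm
    simp only [Finset.mem_filter, Finset.mem_range] at htm ⊢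
    have : r.val ≤ r'.val := hrr
    exact ⟨htm.1, htm.2.1, by omega⟩
  · intro r
    have hsub : ((Finset.range (2*n)).filter fun t =>
        w.getD t true = false ∧ (w.take t).count true + r.val + 1 ≤ n)
        ⊆ (Finset.range (2*n)).filter fun t => w.getD t true = false := by
      intro t htm
      simp only [Finset.mem_filter] at htm ⊢
      exact ⟨htm.1, htm.2.1⟩
    have hcard : ((Finset.range (2*n)).filter fun t => w.getD t true = false).card
        = (w.take (2*n)).count false := by
      rw [count_take_eq w false (2*n)]
      rfl
    have htake : w.take (2*n) = w := List.take_of_length_le (by omega)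
    have htf := count_tf w
    calc Psi n w r ≤ ((Finset.range (2*n)).filter fun t => w.getD t true = false).card :=
          Finset.card_le_card hsub
    _ = n := by rw [hcard, htake]; omega

lemma Psi_Phi (hf : Antitone f) (hfn : ∀ i, f i ≤ n) : Psi n (Phi n f) = f := by
  funext r
  have h1 : pos n f r < 2 * n := pos_lt hfn r
  have h2 : (Phi n f).getD (pos n f r) false = true := by
    rw [getD_Phi h1]
    simp only [decide_eq_true_eq]
    exact ⟨r, rfl⟩
  have h3 : ((Phi n f).take (pos n f r)).count true = n - 1 - r.val := by
    rw [count_take_Phi hf (by omega)]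
    unfold U
    have heq : (Finset.univ.filter fun r' : Fin n => pos n f r' < pos n f r)
        = Finset.univ.filter fun r' : Fin n => r < r' := by
      ext r'
      simp only [Finset.mem_filter, Finset.mem_univ, true_and]
      constructor
      · intro h
        by_contra hc
        push_neg at hc
        rcases eq_or_lt_of_le hc with h5 | h5
        · rw [h5] at h
          omega
        · have := pos_strictAnti hf h5
          omega
      · exact fun h => pos_strictAnti hf h
    rw [heq]
    have : (Finset.univ.filter fun r' : Fin n => r < r') = Finset.Ioi r := by
      ext x
      simp
    rw [this, Fin.card_Ioi]
  have h4 := Psi_spec (Phi n f) length_Phi r (pos n f r) h1 h2 (by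
    rw [h3]
    have : r.val < n := r.isLt
    omega)
  have h5 : r.val < n := r.isLt
  unfold pos at h4
  omega

lemma Phi_Psi {n : ℕ} {w : List Bool} (hw : IsGrandDyck n w) : Phi n (Psi n w) = w := by
  obtain ⟨hlen, hcnt⟩ := hw
  apply List.ext_getElem (by rw [length_Phi, hlen])
  intro t h1 h2
  rw [length_Phi] at h1
  have key : (∃ r : Fin n, pos n (Psi n w) r = t) ↔ w[t] = true := by
    constructor
    · rintro ⟨r, hr⟩
      have hm : n - 1 - r.val < n := by
        have : r.val < n := r.isLt
        omega
      obtain ⟨t0, ht0, htrue, htc⟩ := exists_true_at w hlen hcnt hm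
      have hspec := Psi_spec w hlen r t0 ht0 htrue (by
        rw [htc]
        have : r.val < n := r.isLt
        omega)
      have : t = t0 := by
        unfold pos at hr
        omega
      subst this
      rw [getD_lt w (by omega) false] at htrue
      exact htrue
    · intro htt
      have htrue : w.getD t false = true := by rw [getD_lt w (by omega) false]; exact htt
      have hm : (w.take t).count true < n := by
        have h5 := tc_succ_true w t htrue
        have h6 := tc_le_total w (t+1)
        omega
      refine ⟨⟨n - 1 - (w.take t).count true, by omega⟩, ?_⟩
      have hspec := Psi_spec w hlen ⟨n - 1 - (w.take t).count true, by omega⟩ t (by omega)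
        htrue (by simp; omega)
      unfold pos at hspec ⊢
      simp at hspec ⊢
      omega
  have hofn : (Phi n (Psi n w))[t] = decide (∃ r : Fin n, pos n (Psi n w) r = t) := by
    unfold Phi
    exact List.getElem_ofFn _
  rw [hofn]
  cases hwt : w[t] with
  | true => simp [key, hwt]
  | false =>
    have : ¬ (∃ r : Fin n, pos n (Psi n w) r = t) := by
      rw [key, hwt]
      simp
    simp [this]


/-! ### counting transfer -/

def T (n k : ℕ) : Set (Fin n → ℕ) :=
  {f | IsBoxPartition n f ∧ dsPart n f + (n - M n f) = k}

lemma box_finite (n : ℕ) : {f : Fin n → ℕ | IsBoxPartition n f}.Finite := by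
  apply Set.Finite.subset (Set.Finite.pi (fun _ : Fin n => Set.finite_Iic n))
  intro f hfm
  simp only [Set.mem_pi, Set.mem_univ, Set.mem_Iic, forall_true_left]
  exact fun i => hfm.2 i

lemma T_finite (n k : ℕ) : (T n k).Finite :=
  Set.Finite.subset (box_finite n) (fun f hfm => hfm.1)

lemma g_eq (n k : ℕ) : g n k = (T n k).ncard := by
  have himg : {w | IsGrandDyck n w ∧ dsGD n w = k} = Phi n '' T n k := by
    ext w
    constructor
    · rintro ⟨hgd, hds⟩
      have hb := Psi_box hgd
      refine ⟨Psi n w, ⟨hb, ?_⟩, Phi_Psi hgd⟩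
      have hform := dsGD_Phi hb.1 hb.2
      rw [Phi_Psi hgd] at hform
      omega
    · rintro ⟨f, ⟨⟨hf, hfn⟩, hds⟩, rfl⟩
      exact ⟨Phi_GD hf hfn, by rw [dsGD_Phi hf hfn]; omega⟩
  unfold g
  rw [himg, Set.ncard_image_of_injOn]
  intro f1 h1 f2 h2 he
  rw [← Psi_Phi h1.1.1 h1.1.2, ← Psi_Phi h2.1.1 h2.1.2, he]

/-! ### restriction to the smaller box -/

def rho (m : ℕ) (f : Fin (m+1) → ℕ) : Fin m → ℕ := fun j => f ⟨j.val, by omega⟩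

def extz (m : ℕ) (f' : Fin m → ℕ) : Fin (m+1) → ℕ :=
  fun r => if h : r.val < m then f' ⟨r.val, h⟩ else 0

variable {m : ℕ} {F : Fin (m+1) → ℕ}

lemma last_zero (hf : Antitone F) (hM : M (m+1) F < m + 1) : F ⟨m, by omega⟩ = 0 := by
  by_contra h0
  have hall : ∀ r : Fin (m+1), 1 ≤ F r := by
    intro r
    have := hf (show r ≤ ⟨m, by omega⟩ by simp [Fin.le_def]; omega)
    omega
  have hconj : conjAt (m+1) F 1 = m + 1 := by
    unfold conjAt
    rw [Finset.filter_true_of_mem (fun r _ => hall r)]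
    simp
  have := conjAt_le_M (n := m+1) (f := F) (le_refl 1)
  omega

lemma conj_rho (h0 : F ⟨m, by omega⟩ = 0) {j : ℕ} (hj : 1 ≤ j) :
    conjAt m (rho m F) j = conjAt (m+1) F j := by
  unfold conjAt
  apply Finset.card_bij (fun r _ => (⟨r.val, by omega⟩ : Fin (m+1)))
  · intro r hr
    simp only [Finset.mem_filter, Finset.mem_univ, true_and] at hr ⊢
    exact hr
  · intro a _ b _ hab
    simpa [Fin.ext_iff] using hab
  · intro r' hr'
    simp only [Finset.mem_filter, Finset.mem_univ, true_and] at hr'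
    have hne : r'.val ≠ m := by
      intro hc
      have : F r' = F ⟨m, by omega⟩ := by congr 1; exact Fin.ext hc
      omega
    have hlt : r'.val < m := by have := r'.isLt; omega
    refine ⟨⟨r'.val, hlt⟩, ?_, Fin.ext rfl⟩
    simp only [Finset.mem_filter, Finset.mem_univ, true_and]
    show j ≤ F ⟨r'.val, by omega⟩
    have : (⟨r'.val, by omega⟩ : Fin (m+1)) = r' := Fin.ext rfl
    rw [this]
    exact hr'

lemma sup_rho (h0 : F ⟨m, by omega⟩ = 0) :
    Finset.univ.sup (rho m F) = Finset.univ.sup F := by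
  apply le_antisymm
  · apply Finset.sup_le
    intro j _
    exact Finset.le_sup (f := F) (Finset.mem_univ (⟨j.val, by omega⟩ : Fin (m+1)))
  · apply Finset.sup_le
    intro r _
    rcases Nat.lt_or_ge r.val m with h | h
    · have : F r = rho m F ⟨r.val, h⟩ := by
        unfold rho
        congr 1
      rw [this]
      exact Finset.le_sup (Finset.mem_univ _)
    · have : F r = F ⟨m, by omega⟩ := by
        congr 1
        apply Fin.ext
        show r.val = m
        have := r.isLt
        omega
      rw [this, h0]
      exact Nat.zero_le _

lemma M_rho (h0 : F ⟨m, by omega⟩ = 0) : M m (rho m F) = M (m+1) F := by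
  unfold M
  rw [sup_rho h0, conj_rho h0 (le_refl 1)]

lemma ds_rho (h0 : F ⟨m, by omega⟩ = 0) : dsPart m (rho m F) = dsPart (m+1) F := by
  unfold dsPart
  apply Finset.card_bij (fun r _ => (⟨r.val, by omega⟩ : Fin (m+1)))
  · intro r hr
    simp only [Finset.mem_filter, Finset.mem_univ, true_and] at hr ⊢
    rw [conj_rho h0 (by omega)] at hr
    exact hr
  · intro a _ b _ hab
    simpa [Fin.ext_iff] using hab
  · intro r' hr'
    simp only [Finset.mem_filter, Finset.mem_univ, true_and] at hr'
    have hne : r'.val ≠ m := by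
      intro hc
      have : F r' = F ⟨m, by omega⟩ := by congr 1; exact Fin.ext hc
      omega
    have hlt : r'.val < m := by have := r'.isLt; omega
    refine ⟨⟨r'.val, hlt⟩, ?_, Fin.ext rfl⟩
    simp only [Finset.mem_filter, Finset.mem_univ, true_and]
    rw [conj_rho h0 (by omega)]
    have hsame : rho m F ⟨r'.val, hlt⟩ = F r' := by
      unfold rho
      congr 1
    rw [hsame]
    exact hr'

lemma box_rho (hb : IsBoxPartition (m+1) F) (hM : M (m+1) F < m + 1) :
    IsBoxPartition m (rho m F) := by
  have h0 := last_zero hb.1 hM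
  constructor
  · intro a b hab
    exact hb.1 (Fin.mk_le_mk.mpr hab)
  · intro j
    have h1 : rho m F j ≤ M m (rho m F) := f_le_M _
    rw [M_rho h0] at h1
    omega

lemma rho_extz (f' : Fin m → ℕ) : rho m (extz m f') = f' := by
  funext j
  unfold rho extz
  rw [dif_pos j.isLt]

lemma extz_rho (h0 : F ⟨m, by omega⟩ = 0) : extz m (rho m F) = F := by
  funext r
  unfold extz rho
  rcases Nat.lt_or_ge r.val m with h | h
  · rw [dif_pos h]
  · rw [dif_neg (by omega)]
    have : F r = F ⟨m, by omega⟩ := by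
      congr 1
      apply Fin.ext
      show r.val = m
      have := r.isLt
      omega
    rw [this, h0]

lemma extz_last (f' : Fin m → ℕ) : extz m f' ⟨m, by omega⟩ = 0 := by
  unfold extz
  rw [dif_neg (by simp)]

lemma box_extz {f' : Fin m → ℕ} (hb : IsBoxPartition m f') :
    IsBoxPartition (m+1) (extz m f') := by
  constructor
  · intro a b hab
    unfold extz
    rcases Nat.lt_or_ge b.val m with h | h
    · rw [dif_pos h, dif_pos (by have : a.val ≤ b.val := hab; omega)]
      exact hb.1 (Fin.mk_le_mk.mpr hab)
    · rw [dif_neg (by omega)]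
      exact Nat.zero_le _
  · intro r
    unfold extz
    split
    · exact le_trans (hb.2 _) (by omega)
    · omega


lemma rest_eq (m k : ℕ) (hk : 1 ≤ k) :
    {F : Fin (m+1) → ℕ | IsBoxPartition (m+1) F ∧ M (m+1) F < m + 1 ∧
      dsPart (m+1) F + (m + 1 - M (m+1) F) = k}
    = extz m '' (T m (k-1)) := by
  ext F
  constructor
  · rintro ⟨hb, hM, hds⟩
    have h0 := last_zero hb.1 hM
    refine ⟨rho m F, ⟨box_rho hb hM, ?_⟩, extz_rho h0⟩
    rw [ds_rho h0, M_rho h0]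
    omega
  · rintro ⟨f', ⟨hb', hds'⟩, rfl⟩
    have h0 := extz_last f'
    have hbe := box_extz hb'
    have hM' : M m (rho m (extz m f')) = M (m+1) (extz m f') := M_rho h0
    rw [rho_extz] at hM'
    have hMf' := M_le hb'.2
    have hMlt : M (m+1) (extz m f') < m + 1 := by omega
    have hds2 : dsPart m (rho m (extz m f')) = dsPart (m+1) (extz m f') := ds_rho h0
    rw [rho_extz] at hds2
    exact ⟨hbe, hMlt, by omega⟩

end DSAux

open DSAux in
/-- For `n ≥ 1`: `p(n,k) = g(n,k) − g(n−1,k−1)`, with `g(n−1,−1)` interpreted as `0`. -/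
theorem partition_maxSquare_ds (n k : ℕ) (hn : 1 ≤ n) :
    (p n k : ℤ) = g n k - if k = 0 then 0 else g (n - 1) (k - 1) := by
  obtain ⟨m, rfl⟩ : ∃ m, n = m + 1 := ⟨n - 1, by omega⟩
  have hp : p (m+1) k = {F : Fin (m+1) → ℕ | IsBoxPartition (m+1) F ∧
      M (m+1) F = m+1 ∧ dsPart (m+1) F = k}.ncard := rfl
  by_cases hk : k = 0
  · subst hk
    have hT : T (m+1) 0 = {F : Fin (m+1) → ℕ | IsBoxPartition (m+1) F ∧
        M (m+1) F = m+1 ∧ dsPart (m+1) F = 0} := by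
      ext F
      simp only [T, Set.mem_setOf_eq]
      constructor
      · rintro ⟨hb, h2⟩
        have := M_le hb.2
        exact ⟨hb, by omega, by omega⟩
      · rintro ⟨hb, h2, h3⟩
        exact ⟨hb, by omega⟩
    rw [if_pos rfl, g_eq, hT, hp]
    push_cast
    ring
  · rw [if_neg hk]
    have hk1 : 1 ≤ k := by omega
    set S1 : Set (Fin (m+1) → ℕ) := {F | IsBoxPartition (m+1) F ∧
        M (m+1) F = m+1 ∧ dsPart (m+1) F = k} with hS1
    set S2 : Set (Fin (m+1) → ℕ) := {F | IsBoxPartition (m+1) F ∧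
        M (m+1) F < m+1 ∧ dsPart (m+1) F + (m + 1 - M (m+1) F) = k} with hS2
    have hT : T (m+1) k = S1 ∪ S2 := by
      ext F
      simp only [T, hS1, hS2, Set.mem_setOf_eq, Set.mem_union]
      constructor
      · rintro ⟨hb, h2⟩
        have := M_le hb.2
        rcases Nat.lt_or_ge (M (m+1) F) (m+1) with h | h
        · exact Or.inr ⟨hb, h, h2⟩
        · exact Or.inl ⟨hb, by omega, by omega⟩
      · rintro (⟨hb, h2, h3⟩ | ⟨hb, h2, h3⟩)
        · exact ⟨hb, by omega⟩
        · exact ⟨hb, h3⟩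
    have hdisj : Disjoint S1 S2 := by
      rw [Set.disjoint_left]
      rintro F ⟨hb, h2, h3⟩ ⟨hb', h2', h3'⟩
      omega
    have hfin1 : S1.Finite := (box_finite (m+1)).subset (fun F hF => hF.1)
    have hfin2 : S2.Finite := (box_finite (m+1)).subset (fun F hF => hF.1)
    have hcard : (T (m+1) k).ncard = S1.ncard + S2.ncard := by
      rw [hT]
      exact Set.ncard_union_eq hdisj hfin1 hfin2
    have hrest : S2.ncard = g m (k-1) := by
      rw [hS2, rest_eq m k hk1, Set.ncard_image_of_injOn, ← g_eq]
      intro a _ b _ he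
      have := congrArg (rho m) he
      rwa [rho_extz, rho_extz] at this
    have hg := g_eq (m+1) k
    have hp1 : p (m+1) k = S1.ncard := hp
    have hm1 : m + 1 - 1 = m := by omega
    rw [hm1, hg, hcard, hrest, hp1]
    push_cast
    ring
end

section
/- For all n ≥ 0 and k ≥ 0, the number of partitions λ ∈ P^□_n with dsh(λ) = k equals the number of grand Dyck paths P ∈ 𝒢_n with pho(P) = k. -/
/-- The number of peaks at height 1 of a grand Dyck path of semilength `n`:
`pho(P) = #{i ∈ {1,…,2n−1} : p_i = U, p_{i+1} = D, h_i = 1}` (here `p_i = w.getD (i-1) _`). -/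
def phoGD (n : ℕ) (w : List Bool) : ℕ :=
  ((Finset.Ico 1 (2 * n)).filter fun i =>
    w.getD (i - 1) false = true ∧ w.getD i true = false ∧ ht w i = 1).card

/-- The number of self-conjugate diagonal hooks of the partition encoded by `f`:
`dsh(λ) = #{i ∈ {1,…,δ(λ)} : λ_i = λ'_i}`, where `i ≤ δ(λ)` iff `λ_i ≥ i`. -/
def dshPart (n : ℕ) (f : Fin n → ℕ) : ℕ :=
  (Finset.univ.filter fun i : Fin n =>
    i.val + 1 ≤ f i ∧ f i = conjAt n f (i.val + 1)).card

/-! ### auxiliary definitions -/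

/-- bit at position `m` (0-indexed) of the grand Dyck word attached to `A`. -/
def bitAt (n : ℕ) (A : Finset ℕ) (m : ℕ) : Bool :=
  if m % 2 = 0 then decide (2*n-1-m/2 ∈ A) else decide (m/2 ∈ A)

def wordOf (n : ℕ) (A : Finset ℕ) : List Bool :=
  List.ofFn (fun i : Fin (2*n) => bitAt n A i.val)

/-- number of true bits among the first `m` positions. -/
def ctA (n : ℕ) (A : Finset ℕ) (m : ℕ) : ℕ :=
  ((Finset.range m).filter (fun i => bitAt n A i = true)).card

def mayaG (n : ℕ) (f : Fin n → ℕ) (i : Fin n) : ℕ := f i + (n - 1 - i.val)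

def mayaSet (n : ℕ) (f : Fin n → ℕ) : Finset ℕ := Finset.image (mayaG n f) Finset.univ

def Phi (n : ℕ) (f : Fin n → ℕ) : List Bool := wordOf n (mayaSet n f)

def setOf' (n : ℕ) (w : List Bool) : Finset ℕ :=
  (Finset.range (2*n)).filter
    (fun j => if j < n then w.getD (2*j+1) false = true else w.getD (2*(2*n-1-j)) false = true)

def partOf (n : ℕ) (A : Finset ℕ) (i : Fin n) : ℕ :=
  (A.sort (· ≤ ·)).getD (n - 1 - i.val) 0 - (n - 1 - i.val)

def Psi (n : ℕ) (w : List Bool) : Fin n → ℕ := partOf n (setOf' n w)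

/-! ### word-side basics -/

lemma length_wordOf (n : ℕ) (A : Finset ℕ) : (wordOf n A).length = 2*n := by
  simp [wordOf]

lemma getD_wordOf (n : ℕ) (A : Finset ℕ) {m : ℕ} (hm : m < 2*n) (d : Bool) :
    (wordOf n A).getD m d = bitAt n A m := by
  rw [List.getD_eq_getElem _ _ (by simpa [length_wordOf] using hm)]
  simp [wordOf]

lemma count_take_eq (l : List Bool) (m : ℕ) :
    (l.take m).count true
      = ((Finset.range m).filter (fun i => l.getD i false = true)).card := by
  induction m with
  | zero => simp
  | succ m ih =>
    rw [List.take_succ, List.count_append, ih, Finset.range_add_one, Finset.filter_insert]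
    by_cases hm : m < l.length
    · by_cases hb : l.getD m false = true
      · rw [if_pos hb, Finset.card_insert_of_notMem (by simp)]
        rw [List.getD_eq_getElem _ _ hm] at hb
        simp [List.getElem?_eq_getElem hm, hb]
      · rw [if_neg hb]
        rw [List.getD_eq_getElem _ _ hm] at hb
        simp [List.getElem?_eq_getElem hm, hb]
    · have hb : l.getD m false = false := by
        rw [List.getD_eq_default]; omega
      rw [if_neg (by rw [hb]; simp)]
      simp [List.getElem?_eq_none (by omega : l.length ≤ m)]

lemma count_true_take_wordOf (n : ℕ) (A : Finset ℕ) {m : ℕ} (hm : m ≤ 2*n) :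
    ((wordOf n A).take m).count true = ctA n A m := by
  rw [count_take_eq]
  unfold ctA
  congr 1
  apply Finset.filter_congr
  intro i hi
  rw [Finset.mem_range] at hi
  rw [getD_wordOf n A (by omega)]

lemma count_tf (l : List Bool) : l.count true + l.count false = l.length := by
  induction l with
  | nil => simp
  | cons b t ih => cases b <;> simp [List.count_cons] <;> omega

lemma ht_wordOf (n : ℕ) (A : Finset ℕ) {m : ℕ} (hm : m ≤ 2*n) :
    ht (wordOf n A) m = 2 * (ctA n A m : ℤ) - m := by
  have hlen : ((wordOf n A).take m).length = m := by
    rw [List.length_take, length_wordOf]; omega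
  have hcnt : ((wordOf n A).take m).count true + ((wordOf n A).take m).count false = m := by
    rw [count_tf, hlen]
  have := count_true_take_wordOf n A hm
  unfold ht
  omega


lemma bit_even (n : ℕ) (A : Finset ℕ) (t : ℕ) :
    bitAt n A (2*t) = decide (2*n-1-t ∈ A) := by
  have h1 : (2*t) % 2 = 0 := by omega
  have h2 : (2*t) / 2 = t := by omega
  simp [bitAt, h1, h2]

lemma bit_odd (n : ℕ) (A : Finset ℕ) (t : ℕ) :
    bitAt n A (2*t+1) = decide (t ∈ A) := by
  have h1 : (2*t+1) % 2 = 1 := by omega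
  have h2 : (2*t+1) / 2 = t := by omega
  simp [bitAt, h1, h2]

lemma ct_step (n : ℕ) (A : Finset ℕ) (m : ℕ) :
    ctA n A (m+1) = ctA n A m + (if bitAt n A m = true then 1 else 0) := by
  unfold ctA
  rw [Finset.range_add_one, Finset.filter_insert]
  by_cases hb : bitAt n A m = true
  · rw [if_pos hb, if_pos hb, Finset.card_insert_of_notMem (by simp)]
  · rw [if_neg hb, if_neg hb, add_zero]

lemma ct_double (n : ℕ) (A : Finset ℕ) {t : ℕ} (htn : t ≤ n) :
    ctA n A (2*t) = ((Finset.Ico (2*n-t) (2*n)).filter (· ∈ A)).card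
      + ((Finset.range t).filter (· ∈ A)).card := by
  induction t with
  | zero => simp [ctA]
  | succ t ih =>
    have h2 : 2*(t+1) = (2*t+1)+1 := by ring
    rw [h2, ct_step, ct_step, bit_even, bit_odd, ih (by omega)]
    have hIco : Finset.Ico (2*n-(t+1)) (2*n) = insert (2*n-1-t) (Finset.Ico (2*n-t) (2*n)) := by
      ext x; simp only [Finset.mem_Ico, Finset.mem_insert]; omega
    have hnm1 : (2*n-1-t) ∉ (Finset.Ico (2*n-t) (2*n)).filter (· ∈ A) := by
      simp only [Finset.mem_filter, Finset.mem_Ico]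
      omega
    have hnm2 : t ∉ (Finset.range t).filter (· ∈ A) := by simp
    rw [hIco, Finset.range_add_one, Finset.filter_insert, Finset.filter_insert]
    by_cases hA : 2*n-1-t ∈ A
    · by_cases hB : t ∈ A
      · rw [if_pos hA, if_pos hB, Finset.card_insert_of_notMem hnm1,
          Finset.card_insert_of_notMem hnm2]
        simp [hA, hB]; ring
      · rw [if_pos hA, if_neg hB, Finset.card_insert_of_notMem hnm1]
        simp [hA, hB]; ring
    · by_cases hB : t ∈ A
      · rw [if_neg hA, if_pos hB, Finset.card_insert_of_notMem hnm2]
        simp [hA, hB]; ring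
      · rw [if_neg hA, if_neg hB]
        simp [hA, hB]

/-- the key set of "marked pairs". -/
def Tset (n : ℕ) (A : Finset ℕ) : Finset ℕ :=
  (Finset.range n).filter (fun t => (2*n-1-t) ∈ A ∧ t ∉ A ∧ ctA n A (2*t) = t)

lemma phoGD_wordOf (n : ℕ) (A : Finset ℕ) :
    phoGD n (wordOf n A) = (Tset n A).card := by
  unfold phoGD
  refine (Finset.card_bij (fun t _ => 2*t+1) ?_ ?_ ?_).symm
  · intro t htm
    simp only [Tset, Finset.mem_filter, Finset.mem_range] at htm
    obtain ⟨htn, h1, h2, h3⟩ := htm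
    simp only [Finset.mem_filter, Finset.mem_Ico]
    refine ⟨⟨by omega, by omega⟩, ?_, ?_, ?_⟩
    · have : 2*t+1-1 = 2*t := by omega
      rw [this, getD_wordOf n A (by omega), bit_even]
      simpa using h1
    · rw [getD_wordOf n A (by omega), bit_odd]
      simpa using h2
    · rw [ht_wordOf n A (by omega), ct_step, bit_even]
      rw [if_pos (by simpa using h1), h3]
      push_cast; ring
  · intro a _ b _ h; omega
  · intro i him
    simp only [Finset.mem_filter, Finset.mem_Ico] at him
    obtain ⟨⟨hi1, hi2⟩, h1, h2, h3⟩ := him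
    have hodd : i % 2 = 1 := by
      by_contra hico
      have he : i = 2*(i/2) := by omega
      rw [he, ht_wordOf n A (by omega)] at h3
      omega
    set t := i/2 with htdef
    have hi : i = 2*t+1 := by omega
    refine ⟨t, ?_, by show 2*t+1 = i; omega⟩
    simp only [Tset, Finset.mem_filter, Finset.mem_range]
    rw [hi] at h1 h2 h3
    have e1 : 2*t+1-1 = 2*t := by omega
    rw [e1, getD_wordOf n A (by omega), bit_even] at h1
    rw [getD_wordOf n A (by omega), bit_odd] at h2
    rw [ht_wordOf n A (by omega), ct_step, bit_even, if_pos h1] at h3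
    refine ⟨by omega, by simpa using h1, by simpa using h2, by omega⟩

/-! ### partition side -/

section PartSide

variable {n : ℕ} {f : Fin n → ℕ}

lemma mayaG_strictAnti (hf : IsBoxPartition n f) {i j : Fin n} (hij : i < j) :
    mayaG n f j < mayaG n f i := by
  have h1 : f j ≤ f i := hf.1 hij.le
  have h2 : j.val < n := j.isLt
  have h3 : i.val < j.val := hij
  unfold mayaG
  omega

lemma mayaG_inj (hf : IsBoxPartition n f) : Function.Injective (mayaG n f) := by
  intro i j h
  rcases lt_trichotomy i j with hij | hij | hij
  · exact absurd h (by have := mayaG_strictAnti hf hij; omega)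
  · exact hij
  · exact absurd h (by have := mayaG_strictAnti hf hij; omega)

lemma mayaG_lt (hf : IsBoxPartition n f) (i : Fin n) : mayaG n f i < 2*n := by
  have h1 : f i ≤ n := hf.2 i
  have h2 : i.val < n := i.isLt
  unfold mayaG; omega

lemma card_mayaSet (hf : IsBoxPartition n f) : (mayaSet n f).card = n := by
  rw [mayaSet, Finset.card_image_of_injective _ (mayaG_inj hf)]
  simp

lemma mem_mayaSet {x : ℕ} : x ∈ mayaSet n f ↔ ∃ j : Fin n, mayaG n f j = x := by
  simp [mayaSet]

/-- a down-closed subset of `Fin n` is an initial segment. -/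
lemma mem_iff_lt_card_of_downclosed (D : Finset (Fin n))
    (hD : ∀ (j j' : Fin n), j' ≤ j → j ∈ D → j' ∈ D) (j : Fin n) :
    j ∈ D ↔ j.val < D.card := by
  constructor
  · intro hj
    have hsub : Finset.Iic j ⊆ D := fun j' hj' => hD j j' (Finset.mem_Iic.mp hj') hj
    have := Finset.card_le_card hsub
    rw [Fin.card_Iic] at this
    omega
  · intro hj
    by_contra hnj
    have hsub : D ⊆ Finset.Iio j := by
      intro j' hj'
      rw [Finset.mem_Iio]
      by_contra hge
      exact hnj (hD j' j (le_of_not_gt hge) hj')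
    have := Finset.card_le_card hsub
    rw [Fin.card_Iio] at this
    omega

lemma conj_mem_iff (hf : IsBoxPartition n f) (c : ℕ) (j : Fin n) :
    c ≤ f j ↔ j.val < conjAt n f c := by
  have := mem_iff_lt_card_of_downclosed (Finset.univ.filter fun j : Fin n => c ≤ f j)
    (fun a a' haa ha => by
      simp only [Finset.mem_filter, Finset.mem_univ, true_and] at *
      exact le_trans ha (hf.1 haa)) j
  simpa [conjAt] using this

lemma card_filter_val_lt (m : ℕ) :
    ((Finset.univ : Finset (Fin n)).filter (fun j => j.val < m)).card = min m n := by
  rcases le_or_gt n m with h | h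
  · rw [min_eq_right h]
    rw [Finset.filter_true_of_mem (fun j _ => lt_of_lt_of_le j.isLt h)]
    simp
  · rw [min_eq_left h.le]
    have he : ((Finset.univ : Finset (Fin n)).filter (fun j => j.val < m))
        = Finset.Iio ⟨m, h⟩ := by
      ext j; simp [Fin.lt_def]
    rw [he, Fin.card_Iio]

lemma card_Ico_filter_maya (hf : IsBoxPartition n f) (m : ℕ) :
    ((Finset.Ico m (2*n)).filter (· ∈ mayaSet n f)).card
      = (Finset.univ.filter (fun j : Fin n => m ≤ mayaG n f j)).card := by
  refine (Finset.card_bij (fun j _ => mayaG n f j) ?_ ?_ ?_).symm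
  · intro j hj
    simp only [Finset.mem_filter, Finset.mem_univ, true_and] at hj
    simp only [Finset.mem_filter, Finset.mem_Ico]
    exact ⟨⟨hj, mayaG_lt hf j⟩, mem_mayaSet.mpr ⟨j, rfl⟩⟩
  · intro a _ b _ h
    exact mayaG_inj hf h
  · intro x hx
    simp only [Finset.mem_filter, Finset.mem_Ico] at hx
    obtain ⟨⟨hx1, _⟩, hx2⟩ := hx
    obtain ⟨j, hj⟩ := mem_mayaSet.mp hx2
    exact ⟨j, by simp [hj, hx1], hj⟩

lemma card_range_filter_maya (hf : IsBoxPartition n f) {t : ℕ} (htn : t ≤ 2*n) :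
    ((Finset.range t).filter (· ∈ mayaSet n f)).card
      = n - (Finset.univ.filter (fun j : Fin n => t ≤ mayaG n f j)).card := by
  have hsplit : ((Finset.range t).filter (· ∈ mayaSet n f)).card
      + ((Finset.Ico t (2*n)).filter (· ∈ mayaSet n f)).card = n := by
    rw [← Finset.card_union_of_disjoint]
    · rw [← Finset.filter_union]
      have : Finset.range t ∪ Finset.Ico t (2*n) = Finset.range (2*n) := by
        ext x; simp only [Finset.mem_union, Finset.mem_range, Finset.mem_Ico]; omega
      rw [this]
      have : (Finset.range (2*n)).filter (· ∈ mayaSet n f) = mayaSet n f := by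
        ext x
        simp only [Finset.mem_filter, Finset.mem_range, and_iff_right_iff_imp]
        intro hx
        obtain ⟨j, hj⟩ := mem_mayaSet.mp hx
        have := mayaG_lt hf j
        omega
      rw [this, card_mayaSet hf]
    · rw [Finset.disjoint_left]
      intro x hx1 hx2
      simp only [Finset.mem_filter, Finset.mem_range, Finset.mem_Ico] at hx1 hx2
      omega
  rw [card_Ico_filter_maya hf] at hsplit
  omega

end PartSide

section DshMain

variable {n : ℕ} {f : Fin n → ℕ}

lemma card_upper (hf : IsBoxPartition n f) (i : Fin n) (hFi : i.val+1 ≤ f i) :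
    (Finset.univ.filter (fun j : Fin n => 2*n - (n + i.val - f i) ≤ mayaG n f j)).card
      = i.val := by
  have hFn := hf.2 i
  have hiLt := i.isLt
  have he : (Finset.univ.filter (fun j : Fin n => 2*n - (n + i.val - f i) ≤ mayaG n f j))
      = Finset.univ.filter (fun j : Fin n => j.val < i.val) := by
    apply Finset.filter_congr
    intro j _
    have hj := j.isLt
    have hfj := hf.2 j
    constructor
    · intro h
      by_contra hge
      push_neg at hge
      have hmono := hf.1 (Fin.le_def.mpr hge)
      unfold mayaG at h; omega
    · intro h
      have hmono := hf.1 (Fin.le_def.mpr h.le)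
      unfold mayaG; omega
  rw [he, card_filter_val_lt]; omega

lemma ct_maya (hf : IsBoxPartition n f) (i : Fin n) (hFi : i.val+1 ≤ f i) :
    ctA n (mayaSet n f) (2*(n + i.val - f i))
      = i.val + (n - (Finset.univ.filter
          (fun j : Fin n => (n + i.val - f i) ≤ mayaG n f j)).card) := by
  have hFn := hf.2 i
  rw [ct_double _ _ (by omega : n + i.val - f i ≤ n)]
  rw [card_Ico_filter_maya hf, card_range_filter_maya hf (by omega), card_upper hf i hFi]

lemma dshPart_eq_card_Tset (hf : IsBoxPartition n f) :
    dshPart n f = (Tset n (mayaSet n f)).card := by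
  unfold dshPart Tset
  refine Finset.card_bij (fun i _ => n + i.val - f i) ?_ ?_ ?_
  · intro i hi
    simp only [Finset.mem_filter, Finset.mem_univ, true_and] at hi
    obtain ⟨hi1, hi2⟩ := hi
    have hFn := hf.2 i
    have hiLt := i.isLt
    simp only [Finset.mem_filter, Finset.mem_range]
    refine ⟨by omega, ?_, ?_, ?_⟩
    · refine mem_mayaSet.mpr ⟨i, ?_⟩
      unfold mayaG; omega
    · intro hmem
      obtain ⟨j, hj⟩ := mem_mayaSet.mp hmem
      have hjLt := j.isLt
      have hfj := hf.2 j
      have hsum : f j + f i = i.val + j.val + 1 := by unfold mayaG at hj; omega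
      rcases lt_or_ge j.val (f i) with hjf | hjf
      · have hconj : i.val + 1 ≤ f j :=
          (conj_mem_iff hf (i.val+1) j).mpr (by rw [← hi2]; exact hjf)
        omega
      · have hnconj : ¬ (i.val + 1 ≤ f j) := fun hc => by
          have := (conj_mem_iff hf (i.val+1) j).mp hc
          rw [← hi2] at this; omega
        omega
    · rw [ct_maya hf i hi1]
      have hlower : (Finset.univ.filter
          (fun j : Fin n => (n + i.val - f i) ≤ mayaG n f j)).card = f i := by
        have he : (Finset.univ.filter (fun j : Fin n => (n + i.val - f i) ≤ mayaG n f j))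
            = Finset.univ.filter (fun j : Fin n => j.val < f i) := by
          apply Finset.filter_congr
          intro j _
          have hjLt := j.isLt
          have hfj := hf.2 j
          constructor
          · intro h
            by_contra hge
            push_neg at hge
            have hnconj : ¬ (i.val + 1 ≤ f j) := fun hc => by
              have := (conj_mem_iff hf (i.val+1) j).mp hc
              rw [← hi2] at this; omega
            unfold mayaG at h; omega
          · intro h
            have hconj : i.val + 1 ≤ f j :=
              (conj_mem_iff hf (i.val+1) j).mpr (by rw [← hi2]; exact h)
            unfold mayaG; omega
        rw [he, card_filter_val_lt]; omega
      rw [hlower]; omega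
  · intro a ha b hb h
    simp only [Finset.mem_filter, Finset.mem_univ, true_and] at ha hb
    have hfa := hf.2 a
    have hfb := hf.2 b
    rcases lt_trichotomy a b with hab | hab | hab
    · have hmono := hf.1 hab.le
      have hv := Fin.lt_def.mp hab
      omega
    · exact hab
    · have hmono := hf.1 hab.le
      have hv := Fin.lt_def.mp hab
      omega
  · intro t htm
    simp only [Finset.mem_filter, Finset.mem_range] at htm
    obtain ⟨htn, h1, h2, h3⟩ := htm
    obtain ⟨i, hgi⟩ := mem_mayaSet.mp h1
    have hiLt := i.isLt
    have hFn := hf.2 i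
    have hgi' : f i + (n - 1 - i.val) = 2*n-1-t := by unfold mayaG at hgi; omega
    have hi1 : i.val + 1 ≤ f i := by omega
    have hteq : t = n + i.val - f i := by omega
    have hct := ct_maya hf i hi1
    rw [← hteq] at hct
    set Bset := Finset.univ.filter (fun j : Fin n => t ≤ mayaG n f j) with hBdef
    have hCle : Bset.card ≤ n := le_trans (Finset.card_filter_le _ _) (by simp)
    have hC : Bset.card = f i := by omega
    have hdc : ∀ (j j' : Fin n), j' ≤ j → j ∈ Bset → j' ∈ Bset := by
      intro j j' hle hj
      simp only [hBdef, Finset.mem_filter, Finset.mem_univ, true_and] at hj ⊢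
      have hmono := hf.1 hle
      have hv := Fin.le_def.mp hle
      have hjLt := j.isLt
      unfold mayaG at hj ⊢
      omega
    have hmemiff := fun j => mem_iff_lt_card_of_downclosed Bset hdc j
    have hne : ∀ j : Fin n, mayaG n f j ≠ t := fun j hj => h2 (mem_mayaSet.mpr ⟨j, hj⟩)
    have hconj : conjAt n f (i.val + 1) = f i := by
      unfold conjAt
      have he : Finset.univ.filter (fun j : Fin n => i.val+1 ≤ f j)
          = Finset.univ.filter (fun j : Fin n => j.val < f i) := by
        apply Finset.filter_congr
        intro j _
        have hjLt := j.isLt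
        have hfj := hf.2 j
        constructor
        · intro hfji
          by_contra hge
          push_neg at hge
          have hfi_lt : f i < n := lt_of_le_of_lt hge j.isLt
          have hj1j : (⟨f i, hfi_lt⟩ : Fin n) ≤ j := Fin.le_def.mpr hge
          have hfj1 : i.val + 1 ≤ f ⟨f i, hfi_lt⟩ := le_trans hfji (hf.1 hj1j)
          have hj1mem : (⟨f i, hfi_lt⟩ : Fin n) ∈ Bset := by
            simp only [hBdef, Finset.mem_filter, Finset.mem_univ, true_and]
            unfold mayaG
            simp only
            omega
          have := (hmemiff _).mp hj1mem
          simp only at this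
          omega
        · intro hjf
          have hj0lt : f i - 1 < n := by omega
          have hjj0 : j ≤ (⟨f i - 1, hj0lt⟩ : Fin n) := Fin.le_def.mpr (by simp only; omega)
          have hj0mem : (⟨f i - 1, hj0lt⟩ : Fin n) ∈ Bset :=
            (hmemiff _).mpr (by simp only [hC]; omega)
          have hg0 : t ≤ mayaG n f ⟨f i - 1, hj0lt⟩ := by
            simpa only [hBdef, Finset.mem_filter, Finset.mem_univ, true_and] using hj0mem
          have hne0 := hne ⟨f i - 1, hj0lt⟩
          have hf0 := hf.2 ⟨f i - 1, hj0lt⟩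
          have hfj0 : i.val + 1 ≤ f ⟨f i - 1, hj0lt⟩ := by
            unfold mayaG at hg0 hne0
            simp only at hg0 hne0
            omega
          exact le_trans hfj0 (hf.1 hjj0)
      rw [he, card_filter_val_lt]; omega
    refine ⟨i, ?_, by omega⟩
    simp only [Finset.mem_filter, Finset.mem_univ, true_and]
    exact ⟨hi1, hconj.symm⟩

end DshMain

/-! ### word count and round trips -/

lemma ctA_eq_card (n : ℕ) (A : Finset ℕ) (hA : A ⊆ Finset.range (2*n)) :
    ctA n A (2*n) = A.card := by
  unfold ctA
  refine Finset.card_nbij' (fun m => if m % 2 = 0 then 2*n-1-m/2 else m/2)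
    (fun x => if x < n then 2*x+1 else 2*(2*n-1-x)) ?_ ?_ ?_ ?_
  · intro m hm
    simp only [Finset.mem_coe, Finset.mem_filter, Finset.mem_range] at hm
    obtain ⟨hm1, hm2⟩ := hm
    unfold bitAt at hm2
    split_ifs at hm2 with h <;> simp_all
  · intro x hx
    have hx2 : x < 2*n := Finset.mem_range.mp (hA hx)
    simp only [Finset.mem_coe, Finset.mem_filter, Finset.mem_range]
    split_ifs with h
    · refine ⟨by omega, ?_⟩
      rw [bit_odd]; simpa using hx
    · have he : 2*(2*n-1-x) = 2*(2*n-1-x) := rfl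
      refine ⟨by omega, ?_⟩
      rw [bit_even]
      have : 2*n-1-(2*n-1-x) = x := by omega
      rw [this]; simpa using hx
  · intro m hm
    simp only [Finset.mem_coe, Finset.mem_filter, Finset.mem_range] at hm
    obtain ⟨hm1, _⟩ := hm
    beta_reduce
    split_ifs with h1 h2 h3 <;> omega
  · intro x hx
    have hx2 : x < 2*n := Finset.mem_range.mp (hA hx)
    beta_reduce
    split_ifs with h1 h2 h3 <;> omega

lemma count_wordOf (n : ℕ) (A : Finset ℕ) (hA : A ⊆ Finset.range (2*n)) :
    (wordOf n A).count true = A.card := by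
  have h1 : (wordOf n A).take (2*n) = wordOf n A :=
    List.take_of_length_le (by rw [length_wordOf])
  rw [← h1, count_true_take_wordOf n A (le_refl _), ctA_eq_card n A hA]

lemma setOf'_wordOf (n : ℕ) (A : Finset ℕ) (hA : A ⊆ Finset.range (2*n)) :
    setOf' n (wordOf n A) = A := by
  ext x
  simp only [setOf', Finset.mem_filter, Finset.mem_range]
  by_cases hx : x < n
  · rw [if_pos hx, getD_wordOf n A (by omega), bit_odd]
    simp only [decide_eq_true_eq]
    constructor
    · exact fun h => h.2
    · exact fun h => ⟨by omega, h⟩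
  · rw [if_neg hx]
    constructor
    · intro ⟨h1, h2⟩
      rw [getD_wordOf n A (by omega), bit_even] at h2
      have he : 2*n-1-(2*n-1-x) = x := by omega
      rw [he] at h2
      simpa using h2
    · intro h
      have hx2 : x < 2*n := Finset.mem_range.mp (hA h)
      refine ⟨hx2, ?_⟩
      rw [getD_wordOf n A (by omega), bit_even]
      have he : 2*n-1-(2*n-1-x) = x := by omega
      rw [he]; simpa using h

lemma wordOf_setOf' (n : ℕ) (w : List Bool) (hw : IsGrandDyck n w) :
    wordOf n (setOf' n w) = w := by
  apply List.ext_getElem (by rw [length_wordOf, hw.1])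
  intro i h1 h2
  rw [length_wordOf] at h1
  have hgoal : (wordOf n (setOf' n w))[i] = bitAt n (setOf' n w) i := by
    simp [wordOf]
  rw [hgoal]
  unfold bitAt
  by_cases hp : i % 2 = 0
  · rw [if_pos hp]
    have hj1 : 2*n-1-i/2 < 2*n := by omega
    have hj2 : ¬ (2*n-1-i/2 < n) := by omega
    have hjj : 2*(2*n-1-(2*n-1-i/2)) = i := by omega
    simp only [setOf', Finset.mem_filter, Finset.mem_range, hj1, true_and, if_neg hj2, hjj]
    rw [List.getD_eq_getElem _ _ (by omega)]
    simp
  · rw [if_neg hp]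
    have hj2 : i/2 < n := by omega
    have hjj : 2*(i/2)+1 = i := by omega
    simp only [setOf', Finset.mem_filter, Finset.mem_range, if_pos hj2, hjj]
    rw [List.getD_eq_getElem _ _ (by omega)]
    have : i / 2 < 2*n := by omega
    simp [this]

/-! ### sorted lists and `partOf` -/

lemma sorted_getElem_lt {L : List ℕ} (hL : L.Pairwise (·<·)) {a b : ℕ}
    (hab : a < b) (hb : b < L.length) : L[a]'(by omega) < L[b] := by
  have := hL.rel_get_of_lt (a := ⟨a, by omega⟩) (b := ⟨b, hb⟩) (by simpa using hab)
  simpa using this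

lemma sorted_gap_aux {L : List ℕ} (hL : L.Pairwise (·<·)) :
    ∀ (d a : ℕ) (h : a + d < L.length), L[a]'(by omega) + d ≤ L[a+d]'h := by
  intro d
  induction d with
  | zero => intro a h; simp
  | succ d ih =>
    intro a h
    have h1 := ih a (by omega)
    have h2 : L[a+d]'(by omega) < L[(a+d)+1]'(by omega) :=
      sorted_getElem_lt hL (by omega) (by omega)
    have hg : L[a + (d+1)]'h = L[(a+d)+1]'(by omega) := rfl
    rw [hg]
    omega

lemma sorted_gap {L : List ℕ} (hL : L.Pairwise (·<·)) {a b : ℕ}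
    (hab : a ≤ b) (hb : b < L.length) :
    L[a]'(by omega) + (b - a) ≤ L[b] := by
  obtain ⟨d, rfl⟩ := Nat.exists_eq_add_of_le hab
  have := sorted_gap_aux hL d a hb
  simpa using this

section PartOf

variable {n : ℕ} {A : Finset ℕ}

lemma length_sort_eq (hA2 : A.card = n) : (A.sort (· ≤ ·)).length = n := by
  rw [Finset.length_sort, hA2]

lemma sort_getElem_lb (hA2 : A.card = n) {j : ℕ} (hj : j < n) :
    j ≤ (A.sort (· ≤ ·))[j]'(by rw [length_sort_eq hA2]; exact hj) := by
  have := sorted_gap (List.sortedLT_iff_pairwise.mp (Finset.sortedLT_sort A)) (Nat.zero_le j)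
    (by rw [length_sort_eq hA2]; exact hj)
  omega

lemma sort_getElem_ub (hA1 : A ⊆ Finset.range (2*n)) (hA2 : A.card = n)
    {j : ℕ} (hj : j < n) :
    (A.sort (· ≤ ·))[j]'(by rw [length_sort_eq hA2]; exact hj) ≤ n + j := by
  have hlast : (A.sort (· ≤ ·))[n-1]'(by rw [length_sort_eq hA2]; omega) < 2*n := by
    have hm : (A.sort (· ≤ ·))[n-1]'(by rw [length_sort_eq hA2]; omega) ∈ A.sort (· ≤ ·) :=
      List.getElem_mem _
    rw [Finset.mem_sort] at hm
    exact Finset.mem_range.mp (hA1 hm)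
  have := sorted_gap (List.sortedLT_iff_pairwise.mp (Finset.sortedLT_sort A)) (by omega : j ≤ n-1)
    (by rw [length_sort_eq hA2]; omega)
  omega

lemma partOf_getElem (hA2 : A.card = n) (i : Fin n) :
    partOf n A i = (A.sort (· ≤ ·))[n-1-i.val]'(by rw [length_sort_eq hA2]; omega)
      - (n-1-i.val) := by
  unfold partOf
  rw [List.getD_eq_getElem _ _ (by rw [length_sort_eq hA2]; have := i.isLt; omega)]

lemma isBox_partOf (hA1 : A ⊆ Finset.range (2*n)) (hA2 : A.card = n) :
    IsBoxPartition n (partOf n A) := by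
  constructor
  · intro i i' hii
    rw [partOf_getElem hA2, partOf_getElem hA2]
    have hi := i.isLt
    have hi' := i'.isLt
    have hv := Fin.le_def.mp hii
    have hgap := sorted_gap (List.sortedLT_iff_pairwise.mp (Finset.sortedLT_sort A))
      (by omega : n-1-i'.val ≤ n-1-i.val) (by rw [length_sort_eq hA2]; omega)
    have hlb := sort_getElem_lb hA2 (by omega : n-1-i'.val < n)
    omega
  · intro i
    rw [partOf_getElem hA2]
    have hi := i.isLt
    have := sort_getElem_ub hA1 hA2 (by omega : n-1-i.val < n)
    omega

lemma mayaG_partOf (hA2 : A.card = n) (i : Fin n) :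
    mayaG n (partOf n A) i
      = (A.sort (· ≤ ·))[n-1-i.val]'(by rw [length_sort_eq hA2]; have := i.isLt; omega) := by
  unfold mayaG
  rw [partOf_getElem hA2]
  have hi := i.isLt
  have := sort_getElem_lb hA2 (by omega : n-1-i.val < n)
  omega

lemma mayaSet_partOf (hA2 : A.card = n) : mayaSet n (partOf n A) = A := by
  ext x
  rw [mem_mayaSet]
  constructor
  · intro ⟨i, hi⟩
    rw [mayaG_partOf hA2] at hi
    have hm : x ∈ A.sort (· ≤ ·) := by
      rw [← hi]; exact List.getElem_mem _
    rwa [Finset.mem_sort] at hm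
  · intro hx
    have hm : x ∈ A.sort (· ≤ ·) := (Finset.mem_sort _).mpr hx
    obtain ⟨j, hj, hjx⟩ := List.mem_iff_getElem.mp hm
    rw [length_sort_eq hA2] at hj
    refine ⟨⟨n-1-j, by omega⟩, ?_⟩
    rw [mayaG_partOf hA2]
    have he : n-1-(n-1-j) = j := by omega
    simp only [he]
    exact hjx

lemma partOf_mayaSet {f : Fin n → ℕ} (hf : IsBoxPartition n f) :
    partOf n (mayaSet n f) = f := by
  have hcard := card_mayaSet hf
  set M : List ℕ := List.ofFn (fun j : Fin n => mayaG n f ⟨n-1-j.val, by have := j.isLt; omega⟩)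
    with hMdef
  have hMsorted : M.Pairwise (· < ·) := by
    rw [hMdef]
    refine List.pairwise_ofFn.mpr ?_
    intro a b hab
    refine mayaG_strictAnti hf ?_
    have ha := a.isLt
    have hb := b.isLt
    have hab' := Fin.lt_def.mp hab
    exact Fin.lt_def.mpr (by simp only; omega)
  have hMfin : M.toFinset = mayaSet n f := by
    ext x
    rw [List.mem_toFinset, hMdef, List.mem_ofFn, mem_mayaSet]
    constructor
    · intro ⟨j, hj⟩
      exact ⟨_, hj⟩
    · intro ⟨i, hi⟩
      have hiLt := i.isLt
      refine ⟨⟨n-1-i.val, by omega⟩, ?_⟩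
      have he : n-1-(n-1-i.val) = i.val := by omega
      simp only [he]
      rw [← hi]
  have hsort : (mayaSet n f).sort (· ≤ ·) = M := by
    rw [← hMfin]
    exact (List.toFinset_sort _ hMsorted.nodup).mpr (hMsorted.imp le_of_lt)
  funext i
  have hiLt := i.isLt
  unfold partOf
  rw [hsort]
  rw [List.getD_eq_getElem _ _ (by rw [hMdef, List.length_ofFn]; omega)]
  have hgv : M[n-1-i.val]'(by rw [hMdef]; simp only [List.length_ofFn]; omega)
      = mayaG n f i := by
    simp only [hMdef, List.getElem_ofFn]
    congr 1
    exact Fin.ext (by simp only; omega)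
  rw [hgv]
  unfold mayaG
  omega

end PartOf

lemma mayaSet_subset {n : ℕ} {f : Fin n → ℕ} (hf : IsBoxPartition n f) :
    mayaSet n f ⊆ Finset.range (2*n) := fun x hx => by
  obtain ⟨j, hj⟩ := mem_mayaSet.mp hx
  rw [Finset.mem_range, ← hj]; exact mayaG_lt hf j


/-- The number of partitions in `P^□_n` with `dsh(λ) = k` equals the number of grand Dyck
paths of semilength `n` with `k` peaks at height 1. -/
theorem boxPartition_dsh_eq_grandDyck_pho (n k : ℕ) :
    {f : Fin n → ℕ | IsBoxPartition n f ∧ dshPart n f = k}.ncard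
      = {w : List Bool | IsGrandDyck n w ∧ phoGD n w = k}.ncard := by
  have himg : {w : List Bool | IsGrandDyck n w ∧ phoGD n w = k}
      = (Phi n) '' {f : Fin n → ℕ | IsBoxPartition n f ∧ dshPart n f = k} := by
    ext w
    simp only [Set.mem_image, Set.mem_setOf_eq]
    constructor
    · intro ⟨hw, hpho⟩
      set A := setOf' n w with hAdef
      have hA1 : A ⊆ Finset.range (2*n) := Finset.filter_subset _ _
      have hword : wordOf n A = w := wordOf_setOf' n w hw
      have hA2 : A.card = n := by
        rw [← count_wordOf n A hA1, hword, hw.2]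
      refine ⟨partOf n A, ⟨isBox_partOf hA1 hA2, ?_⟩, ?_⟩
      · rw [dshPart_eq_card_Tset (isBox_partOf hA1 hA2), mayaSet_partOf hA2,
          ← phoGD_wordOf, hword]
        exact hpho
      · show Phi n (partOf n A) = w
        rw [Phi, mayaSet_partOf hA2, hword]
    · intro ⟨f, ⟨hf, hdsh⟩, hw⟩
      subst hw
      have hA1 := mayaSet_subset hf
      have hA2 := card_mayaSet hf
      refine ⟨⟨length_wordOf n _, ?_⟩, ?_⟩
      · show (Phi n f).count true = n
        rw [Phi, count_wordOf n _ hA1, hA2]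
      · show phoGD n (Phi n f) = k
        rw [Phi, phoGD_wordOf, ← dshPart_eq_card_Tset hf, hdsh]
  rw [himg]
  refine (Set.ncard_image_of_injOn ?_).symm
  intro f1 h1 f2 h2 he
  have hmaya : mayaSet n f1 = mayaSet n f2 := by
    have hcong := congrArg (setOf' n) he
    rw [Phi, Phi, setOf'_wordOf n _ (mayaSet_subset h1.1),
      setOf'_wordOf n _ (mayaSet_subset h2.1)] at hcong
    exact hcong
  calc f1 = partOf n (mayaSet n f1) := (partOf_mayaSet h1.1).symm
    _ = partOf n (mayaSet n f2) := by rw [hmaya]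
    _ = f2 := partOf_mayaSet h2.1
end
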